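/- arXiv:2205.04451 — 4 statements merged into one kernel-verified Lean document; each statement's English description precedes it below -/
import Mathlib

section
/- Let α ∈ (0,1), χ_α > 0, l_o > 0 and fix X ∈ ℝ² with X ≠ 0. Define A(ρ) = ∫_0^{ρ/l_o} u^{−α−1} sin(u) du for ρ > 0, and F(X,z) = (χ_α/π²) [ z^{α−1} A(z) − (z² + |X|²)^{(α−1)/2} A(√(z² + |X|²)) ] for z > 0. Then lim_{z→∞} z^{3−α} F(X,z) = C_α (1−α) |X|² / (2π²), where C_α = π χ_α / (2 cos(απ/2) Γ(1+α)). -/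
open MeasureTheory Real Filter Set

set_option maxHeartbeats 1000000

lemma kernel_cont {α : ℝ} : ∀ u : ℝ, u ≠ 0 →
    ContinuousAt (fun u : ℝ => u ^ (-α - 1) * Real.sin u) u := by
  intro u hu
  exact (Real.continuousAt_rpow_const u _ (Or.inl hu)).mul Real.continuous_sin.continuousAt

lemma kernel_integrable {α : ℝ} (h0 : 0 < α) (h1 : α < 1) :
    IntegrableOn (fun u : ℝ => u ^ (-α - 1) * Real.sin u) (Ioi 0) := by
  have hcont : ContinuousOn (fun u : ℝ => u ^ (-α - 1) * Real.sin u) (Ioi 0) :=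
    fun u hu => (kernel_cont u (ne_of_gt hu)).continuousWithinAt
  have h01 : IntegrableOn (fun u : ℝ => u ^ (-α - 1) * Real.sin u) (Ioc 0 1) := by
    have hmaj : IntegrableOn (fun u : ℝ => u ^ (-α)) (Ioc 0 1) := by
      have := (intervalIntegral.intervalIntegrable_rpow' (r := -α) (a := 0) (b := 1) (by linarith))
      rwa [intervalIntegrable_iff_integrableOn_Ioc_of_le zero_le_one] at this
    refine Integrable.mono' hmaj ((hcont.mono Ioc_subset_Ioi_self).aestronglyMeasurable
      measurableSet_Ioc) ?_
    filter_upwards [ae_restrict_mem measurableSet_Ioc] with u hu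
    have hu0 : 0 < u := hu.1
    rw [norm_mul, Real.norm_rpow_of_nonneg hu0.le, Real.norm_eq_abs, Real.norm_eq_abs,
      abs_of_pos hu0]
    calc u ^ (-α - 1) * |Real.sin u| ≤ u ^ (-α - 1) * u := by
          exact mul_le_mul_of_nonneg_left ((Real.abs_sin_le_abs).trans (le_of_eq (abs_of_pos hu0)))
            (Real.rpow_nonneg hu0.le _)
      _ = u ^ (-α) := by
          rw [← Real.rpow_add_one (ne_of_gt hu0)]; ring_nf
  have h1i : IntegrableOn (fun u : ℝ => u ^ (-α - 1) * Real.sin u) (Ioi 1) := by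
    have hmaj : IntegrableOn (fun u : ℝ => u ^ (-α - 1)) (Ioi 1) :=
      integrableOn_Ioi_rpow_of_lt (by linarith) one_pos
    refine Integrable.mono' hmaj ((hcont.mono (Ioi_subset_Ioi zero_le_one)).aestronglyMeasurable
      measurableSet_Ioi) ?_
    filter_upwards [ae_restrict_mem measurableSet_Ioi] with u hu
    have hu0 : (0:ℝ) < u := lt_trans one_pos hu
    rw [norm_mul, Real.norm_rpow_of_nonneg hu0.le, Real.norm_eq_abs, Real.norm_eq_abs,
      abs_of_pos hu0]
    calc u ^ (-α - 1) * |Real.sin u| ≤ u ^ (-α - 1) * 1 :=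
          mul_le_mul_of_nonneg_left (abs_le.mpr ⟨Real.neg_one_le_sin u, Real.sin_le_one u⟩) (Real.rpow_nonneg hu0.le _)
      _ = u ^ (-α - 1) := mul_one _
  have : Ioc (0:ℝ) 1 ∪ Ioi 1 = Ioi 0 := Ioc_union_Ioi_eq_Ioi zero_le_one
  rw [← this]
  exact h01.union h1i

section
variable {α : ℝ}

lemma kernel_tail_bound (h0 : 0 < α) (h1 : α < 1) {T : ℝ} (hT : 0 < T) :
    |∫ u in Ioi T, u ^ (-α - 1) * Real.sin u| ≤ T ^ (-α) / α := by
  have hint : IntegrableOn (fun u : ℝ => u ^ (-α - 1) * Real.sin u) (Ioi T) :=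
    (kernel_integrable h0 h1).mono_set (Ioi_subset_Ioi hT.le)
  have hmaj : IntegrableOn (fun u : ℝ => u ^ (-α - 1)) (Ioi T) :=
    integrableOn_Ioi_rpow_of_lt (by linarith) hT
  have h2 : |∫ u in Ioi T, u ^ (-α - 1) * Real.sin u| ≤ ∫ u in Ioi T, u ^ (-α - 1) := by
    rw [← Real.norm_eq_abs]
    refine (norm_integral_le_integral_norm _).trans ?_
    refine setIntegral_mono_on hint.norm hmaj measurableSet_Ioi (fun u hu => ?_)
    have hu0 : 0 < u := lt_trans hT hu
    rw [norm_mul, Real.norm_rpow_of_nonneg hu0.le, Real.norm_eq_abs, Real.norm_eq_abs,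
      abs_of_pos hu0]
    calc u ^ (-α - 1) * |Real.sin u| ≤ u ^ (-α - 1) * 1 :=
        mul_le_mul_of_nonneg_left (abs_le.mpr ⟨Real.neg_one_le_sin u, Real.sin_le_one u⟩)
          (Real.rpow_nonneg hu0.le _)
      _ = u ^ (-α - 1) := mul_one _
  refine h2.trans (le_of_eq ?_)
  rw [integral_Ioi_rpow_of_lt (by linarith) hT]
  have : -α - 1 + 1 = -α := by ring
  rw [this]
  rw [div_eq_div_iff (by linarith) h0.ne']
  ring

lemma kernel_split (h0 : 0 < α) (h1 : α < 1) {T : ℝ} (hT : 0 < T) :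
    (∫ u in Ioi (0:ℝ), u ^ (-α - 1) * Real.sin u) =
      (∫ u in Ioc (0:ℝ) T, u ^ (-α - 1) * Real.sin u) +
      ∫ u in Ioi T, u ^ (-α - 1) * Real.sin u := by
  have hint : IntegrableOn (fun u : ℝ => u ^ (-α - 1) * Real.sin u) (Ioi 0) :=
    kernel_integrable h0 h1
  rw [← setIntegral_union Ioc_disjoint_Ioi_same measurableSet_Ioi
    (hint.mono_set Ioc_subset_Ioi_self) (hint.mono_set (Ioi_subset_Ioi hT.le)),
    Ioc_union_Ioi_eq_Ioi hT.le]

end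

lemma laplace_sin {b : ℝ} (hb : 0 < b) :
    ∫ u in Ioi (0:ℝ), Real.exp (-(b * u)) * Real.sin u = 1 / (b ^ 2 + 1) := by
  have hb1 : (0:ℝ) < b ^ 2 + 1 := by positivity
  set φ : ℝ → ℝ := fun u => -(Real.exp (-(b * u)) * (b * Real.sin u + Real.cos u)) / (b ^ 2 + 1)
    with hφ
  have hderiv : ∀ u ∈ Ici (0:ℝ), HasDerivAt φ (Real.exp (-(b * u)) * Real.sin u) u := by
    intro u _
    have h1 : HasDerivAt (fun y : ℝ => Real.exp (-(b * y))) (Real.exp (-(b * u)) * -(b * 1)) u :=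
      (((hasDerivAt_id u).const_mul b).neg).exp
    have h2 : HasDerivAt (fun y : ℝ => b * Real.sin y + Real.cos y)
        (b * Real.cos u + -Real.sin u) u :=
      ((Real.hasDerivAt_sin u).const_mul b).add (Real.hasDerivAt_cos u)
    have := ((h1.mul h2).neg).div_const (b ^ 2 + 1)
    refine this.congr_deriv ?_
    field_simp
    ring
  have hmono : IntegrableOn (fun u : ℝ => Real.exp (-(b * u)) * Real.sin u) (Ioi 0) := by
    refine Integrable.mono' (exp_neg_integrableOn_Ioi 0 hb)
      ((Real.continuous_exp.comp (continuous_const.mul continuous_id).neg).mul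
        Real.continuous_sin).aestronglyMeasurable.restrict ?_
    filter_upwards with u
    rw [norm_mul, Real.norm_eq_abs, Real.norm_eq_abs, abs_exp]
    calc Real.exp (-(b*u)) * |Real.sin u| ≤ Real.exp (-(b*u)) * 1 :=
        mul_le_mul_of_nonneg_left (abs_le.mpr ⟨Real.neg_one_le_sin u, Real.sin_le_one u⟩)
          (Real.exp_nonneg _)
      _ = Real.exp (-(b*u)) := mul_one _
      _ = Real.exp (-b*u) := by rw [neg_mul]
  have hlim : Tendsto φ atTop (nhds 0) := by
    have hbt : Tendsto (fun u : ℝ => -(b * u)) atTop atBot :=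
      tendsto_neg_atBot_iff.mpr (Tendsto.const_mul_atTop hb tendsto_id)
    have hexp : Tendsto (fun u : ℝ => Real.exp (-(b * u))) atTop (nhds 0) :=
      Real.tendsto_exp_atBot.comp hbt
    have hbound : ∀ u : ℝ, ‖φ u‖ ≤ Real.exp (-(b * u)) * ((b + 1) / (b ^ 2 + 1)) := by
      intro u
      rw [hφ]
      simp only [Real.norm_eq_abs, abs_div, abs_neg, abs_mul, Real.abs_exp, abs_of_pos hb1,
        ← mul_div_assoc]
      gcongr
      calc |b * Real.sin u + Real.cos u| ≤ |b * Real.sin u| + |Real.cos u| := abs_add_le _ _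
        _ ≤ b * 1 + 1 := by
            refine add_le_add ?_ (Real.abs_cos_le_one u)
            rw [abs_mul, abs_of_pos hb]
            exact mul_le_mul_of_nonneg_left
              (abs_le.mpr ⟨Real.neg_one_le_sin u, Real.sin_le_one u⟩) hb.le
        _ = b + 1 := by ring
    exact squeeze_zero_norm hbound (by simpa using hexp.mul_const ((b + 1) / (b ^ 2 + 1)))
  have := integral_Ioi_of_hasDerivAt_of_tendsto' hderiv hmono hlim
  rw [this, hφ]
  simp only [mul_zero, neg_zero, Real.exp_zero, Real.sin_zero, Real.cos_zero, mul_zero, zero_add,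
    one_mul]
  ring

lemma gamma_kernel_integrable {s b : ℝ} (hs : -1 < s) (hb : 0 < b) :
    IntegrableOn (fun t : ℝ => t ^ s * Real.exp (-(b * t))) (Ioi 0) := by
  have h := integrableOn_rpow_mul_exp_neg_mul_rpow hs (one_pos : (0:ℝ) < 1) hb
  refine h.congr_fun (fun x hx => ?_) measurableSet_Ioi
  beta_reduce
  rw [Real.rpow_one, neg_mul]

lemma fubini_one {α : ℝ} (h0 : 0 < α) (h1 : α < 1) :
    Real.Gamma (α + 1) * ∫ u in Ioi (0:ℝ), u ^ (-α - 1) * Real.sin u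
      = ∫ t in Ioi (0:ℝ), t ^ α / (t ^ 2 + 1) := by
  have key : ∀ u : ℝ, 0 < u →
      (∫ t in Ioi (0:ℝ), Real.sin u * (t ^ α * Real.exp (-(u * t))))
        = Real.Gamma (α + 1) * (u ^ (-α - 1) * Real.sin u) := by
    intro u hu
    rw [integral_const_mul]
    have h2 : ∫ t in Ioi (0:ℝ), t ^ α * Real.exp (-(u * t)) = (1/u) ^ (α+1) * Real.Gamma (α+1) := by
      have := Real.integral_rpow_mul_exp_neg_mul_Ioi (a := α + 1) (by linarith) hu
      simpa using this
    rw [h2]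
    have : (1/u) ^ (α+1) = u ^ (-α - 1) := by
      rw [one_div, ← Real.rpow_neg_one u, ← Real.rpow_mul hu.le]
      congr 1; ring
    rw [this]; ring
  -- product integrability
  have hcont : ContinuousOn (fun p : ℝ × ℝ => Real.sin p.1 * (p.2 ^ α * Real.exp (-(p.1 * p.2)))) ((Ioi 0) ×ˢ (Ioi 0)) := by
    intro p hp
    have hp2 : (0:ℝ) < p.2 := hp.2
    exact ((Real.continuous_sin.comp continuous_fst).continuousAt.mul
      ((continuous_snd.continuousAt.rpow_const (Or.inl hp2.ne')).mul
        (Real.continuous_exp.comp (continuous_fst.mul continuous_snd).neg).continuousAt)).continuousWithinAt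
  have hmeas : AEStronglyMeasurable (fun p : ℝ × ℝ => Real.sin p.1 * (p.2 ^ α * Real.exp (-(p.1 * p.2))))
      ((volume.restrict (Ioi 0)).prod (volume.restrict (Ioi 0))) := by
    rw [Measure.prod_restrict]
    exact hcont.aestronglyMeasurable (measurableSet_Ioi.prod measurableSet_Ioi)
  have hint2 : Integrable (fun p : ℝ × ℝ => Real.sin p.1 * (p.2 ^ α * Real.exp (-(p.1 * p.2))))
      ((volume.restrict (Ioi 0)).prod (volume.restrict (Ioi 0))) := by
    refine (integrable_prod_iff hmeas).mpr ⟨?_, ?_⟩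
    · filter_upwards [ae_restrict_mem measurableSet_Ioi] with u hu
      exact ((gamma_kernel_integrable (by linarith) hu).const_mul _)
    · -- integrable (fun u => ∫ t, ‖f (u,t)‖)
      have hmaj : Integrable (fun u : ℝ => Real.Gamma (α+1) * (u ^ (-α-1) * |Real.sin u|))
          (volume.restrict (Ioi 0)) := by
        refine (Integrable.const_mul ?_ _)
        refine ((kernel_integrable h0 h1).norm).congr ?_
        filter_upwards [ae_restrict_mem measurableSet_Ioi] with u hu
        rw [norm_mul, Real.norm_rpow_of_nonneg (le_of_lt hu), Real.norm_eq_abs,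
          Real.norm_eq_abs, abs_of_pos hu]
      refine hmaj.congr ?_
      filter_upwards [ae_restrict_mem measurableSet_Ioi] with u hu
      have : (∫ t in Ioi (0:ℝ), ‖Real.sin u * (t ^ α * Real.exp (-(u * t)))‖)
          = ∫ t in Ioi (0:ℝ), |Real.sin u| * (t ^ α * Real.exp (-(u * t))) := by
        refine setIntegral_congr_fun measurableSet_Ioi (fun t ht => ?_)
        simp only [norm_mul, Real.norm_eq_abs, Real.abs_exp,
          abs_of_nonneg (Real.rpow_nonneg (le_of_lt ht) α)]
      rw [this, integral_const_mul]
      have h2 : ∫ t in Ioi (0:ℝ), t ^ α * Real.exp (-(u * t)) = (1/u) ^ (α+1) * Real.Gamma (α+1) := by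
        have := Real.integral_rpow_mul_exp_neg_mul_Ioi (a := α + 1) (by linarith) hu
        simpa using this
      rw [h2]
      have h3 : (1/u) ^ (α+1) = u ^ (-α - 1) := by
        rw [one_div, ← Real.rpow_neg_one u, ← Real.rpow_mul hu.le]
        congr 1; ring
      rw [h3]; ring
  have hswap := integral_integral_swap
    (f := fun u t => Real.sin u * (t ^ α * Real.exp (-(u * t)))) hint2
  -- LHS of hswap equals Γ(α+1) * I
  have hLHS : (∫ u in Ioi (0:ℝ), ∫ t in Ioi (0:ℝ), Real.sin u * (t ^ α * Real.exp (-(u * t))))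
      = Real.Gamma (α + 1) * ∫ u in Ioi (0:ℝ), u ^ (-α - 1) * Real.sin u := by
    rw [← integral_const_mul]
    refine setIntegral_congr_fun measurableSet_Ioi (fun u hu => ?_)
    exact key u hu
  have hRHS : (∫ t in Ioi (0:ℝ), ∫ u in Ioi (0:ℝ), Real.sin u * (t ^ α * Real.exp (-(u * t))))
      = ∫ t in Ioi (0:ℝ), t ^ α / (t ^ 2 + 1) := by
    refine setIntegral_congr_fun measurableSet_Ioi (fun t ht => ?_)
    have : (∫ u in Ioi (0:ℝ), Real.sin u * (t ^ α * Real.exp (-(u * t))))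
        = t ^ α * ∫ u in Ioi (0:ℝ), Real.exp (-(t * u)) * Real.sin u := by
      rw [← integral_const_mul]
      refine setIntegral_congr_fun measurableSet_Ioi (fun u hu => ?_)
      rw [mul_comm u t]; ring
    rw [this, laplace_sin ht, mul_one_div]
  rw [← hLHS, ← hRHS]
  exact hswap

lemma exp_kernel_integrable {c : ℝ} (hc : 0 < c) :
    IntegrableOn (fun s : ℝ => Real.exp (-(c * s))) (Ioi 0) := by
  have h := exp_neg_integrableOn_Ioi 0 hc
  exact h.congr_fun (fun x _ => by beta_reduce; rw [neg_mul]) measurableSet_Ioi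

lemma integral_exp_neg_mul_Ioi' {c : ℝ} (hc : 0 < c) :
    ∫ s in Ioi (0:ℝ), Real.exp (-(c * s)) = 1 / c := by
  have h := Real.integral_rpow_mul_exp_neg_mul_Ioi (a := 1) one_pos hc
  simp only [sub_self, Real.rpow_zero, one_mul, Real.rpow_one, Real.Gamma_one, mul_one] at h
  exact h

lemma beta_integrand_integrable {a : ℝ} (h0 : 0 < a) (h1 : a < 1) :
    IntegrableOn (fun y : ℝ => y ^ (a - 1) / (1 + y)) (Ioi 0) := by
  have hcont : ContinuousOn (fun y : ℝ => y ^ (a - 1) / (1 + y)) (Ioi 0) := by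
    intro y hy
    have hy0 : (0:ℝ) < y := hy
    exact ((Real.continuousAt_rpow_const y (a-1) (Or.inl hy0.ne')).div
      ((continuous_const.add continuous_id).continuousAt) (by show (1:ℝ) + y ≠ 0; positivity)).continuousWithinAt
  have h01 : IntegrableOn (fun y : ℝ => y ^ (a - 1) / (1 + y)) (Ioc 0 1) := by
    have hmaj : IntegrableOn (fun y : ℝ => y ^ (a - 1)) (Ioc 0 1) := by
      have := (intervalIntegral.intervalIntegrable_rpow' (r := a - 1) (a := 0) (b := 1)
        (by linarith))
      rwa [intervalIntegrable_iff_integrableOn_Ioc_of_le zero_le_one] at this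
    refine Integrable.mono' hmaj ((hcont.mono Ioc_subset_Ioi_self).aestronglyMeasurable
      measurableSet_Ioc) ?_
    filter_upwards [ae_restrict_mem measurableSet_Ioc] with y hy
    have hy0 : 0 < y := hy.1
    rw [Real.norm_eq_abs, abs_of_nonneg (by positivity)]
    exact div_le_self (by positivity) (by linarith)
  have h1i : IntegrableOn (fun y : ℝ => y ^ (a - 1) / (1 + y)) (Ioi 1) := by
    have hmaj : IntegrableOn (fun y : ℝ => y ^ (a - 2)) (Ioi 1) :=
      integrableOn_Ioi_rpow_of_lt (by linarith) one_pos
    refine Integrable.mono' hmaj ((hcont.mono (Ioi_subset_Ioi zero_le_one)).aestronglyMeasurable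
      measurableSet_Ioi) ?_
    filter_upwards [ae_restrict_mem measurableSet_Ioi] with y hy
    have hy0 : (0:ℝ) < y := lt_trans one_pos hy
    rw [Real.norm_eq_abs, abs_of_nonneg (by positivity)]
    calc y ^ (a-1) / (1 + y) ≤ y ^ (a-1) / y :=
        div_le_div_of_nonneg_left (by positivity) hy0 (by linarith)
      _ = y ^ (a - 2) := by
        nth_rewrite 2 [← Real.rpow_one y]
        rw [← Real.rpow_sub hy0]
        congr 1; ring
  have : Ioc (0:ℝ) 1 ∪ Ioi 1 = Ioi 0 := Ioc_union_Ioi_eq_Ioi zero_le_one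
  rw [← this]
  exact h01.union h1i

lemma beta_reflection {a : ℝ} (h0 : 0 < a) (h1 : a < 1) :
    ∫ y in Ioi (0:ℝ), y ^ (a - 1) / (1 + y) = Real.Gamma a * Real.Gamma (1 - a) := by
  have hcont : ContinuousOn (fun p : ℝ × ℝ => p.1 ^ (a - 1) * Real.exp (-((1 + p.1) * p.2)))
      ((Ioi 0) ×ˢ (Ioi 0)) := by
    intro p hp
    have hp1 : (0:ℝ) < p.1 := hp.1
    exact ((continuous_fst.continuousAt.rpow_const (Or.inl hp1.ne')).mul
      (Real.continuous_exp.comp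
        (((continuous_const.add continuous_fst).mul continuous_snd).neg)).continuousAt).continuousWithinAt
  have hmeas : AEStronglyMeasurable (fun p : ℝ × ℝ => p.1 ^ (a - 1) * Real.exp (-((1 + p.1) * p.2)))
      ((volume.restrict (Ioi 0)).prod (volume.restrict (Ioi 0))) := by
    rw [Measure.prod_restrict]
    exact hcont.aestronglyMeasurable (measurableSet_Ioi.prod measurableSet_Ioi)
  have hint2 : Integrable (fun p : ℝ × ℝ => p.1 ^ (a - 1) * Real.exp (-((1 + p.1) * p.2)))
      ((volume.restrict (Ioi 0)).prod (volume.restrict (Ioi 0))) := by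
    refine (integrable_prod_iff hmeas).mpr ⟨?_, ?_⟩
    · filter_upwards [ae_restrict_mem measurableSet_Ioi] with y hy
      have hy0 : (0:ℝ) < y := hy
      exact (exp_kernel_integrable (by linarith : (0:ℝ) < 1 + y)).const_mul _
    · refine (beta_integrand_integrable h0 h1).congr ?_
      filter_upwards [ae_restrict_mem measurableSet_Ioi] with y hy
      have hy0 : (0:ℝ) < y := hy
      have h1y : (0:ℝ) < 1 + y := by linarith
      have : (∫ s in Ioi (0:ℝ), ‖y ^ (a - 1) * Real.exp (-((1 + y) * s))‖)
          = ∫ s in Ioi (0:ℝ), y ^ (a - 1) * Real.exp (-((1 + y) * s)) := by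
        refine setIntegral_congr_fun measurableSet_Ioi (fun s hs => ?_)
        simp [Real.norm_eq_abs, Real.abs_exp, abs_of_pos hy0,
          abs_of_nonneg (Real.rpow_nonneg hy0.le (a-1))]
      rw [this, integral_const_mul, integral_exp_neg_mul_Ioi' h1y, mul_one_div]
  have hswap := integral_integral_swap
    (f := fun y s => y ^ (a - 1) * Real.exp (-((1 + y) * s))) hint2
  have hLHS : (∫ y in Ioi (0:ℝ), ∫ s in Ioi (0:ℝ), y ^ (a - 1) * Real.exp (-((1 + y) * s)))
      = ∫ y in Ioi (0:ℝ), y ^ (a - 1) / (1 + y) := by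
    refine setIntegral_congr_fun measurableSet_Ioi (fun y hy => ?_)
    have hy0 : (0:ℝ) < y := hy
    rw [integral_const_mul, integral_exp_neg_mul_Ioi' (by linarith : (0:ℝ) < 1 + y), mul_one_div]
  have hRHS : (∫ s in Ioi (0:ℝ), ∫ y in Ioi (0:ℝ), y ^ (a - 1) * Real.exp (-((1 + y) * s)))
      = Real.Gamma a * Real.Gamma (1 - a) := by
    have step : ∀ s : ℝ, 0 < s →
        (∫ y in Ioi (0:ℝ), y ^ (a - 1) * Real.exp (-((1 + y) * s)))
          = Real.Gamma a * (s ^ ((1 - a) - 1) * Real.exp (-(1 * s))) := by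
      intro s hs
      have : (∫ y in Ioi (0:ℝ), y ^ (a - 1) * Real.exp (-((1 + y) * s)))
          = Real.exp (-s) * ∫ y in Ioi (0:ℝ), y ^ (a - 1) * Real.exp (-(s * y)) := by
        rw [← integral_const_mul]
        refine setIntegral_congr_fun measurableSet_Ioi (fun y hy => ?_)
        rw [show -((1+y)*s) = -s + -(s*y) by ring, Real.exp_add]
        ring
      rw [this, Real.integral_rpow_mul_exp_neg_mul_Ioi h0 hs]
      have h3 : (1/s) ^ a = s ^ ((1 - a) - 1) := by
        rw [one_div, ← Real.rpow_neg_one s, ← Real.rpow_mul hs.le]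
        congr 1; ring
      rw [h3]
      ring_nf
    have hcongr : (∫ s in Ioi (0:ℝ), ∫ y in Ioi (0:ℝ), y ^ (a - 1) * Real.exp (-((1 + y) * s)))
        = ∫ s in Ioi (0:ℝ), Real.Gamma a * (s ^ ((1 - a) - 1) * Real.exp (-(1 * s))) :=
      setIntegral_congr_fun measurableSet_Ioi (fun s hs => step s hs)
    rw [hcongr, integral_const_mul, Real.integral_rpow_mul_exp_neg_mul_Ioi (by linarith) one_pos]
    norm_num
  rw [← hLHS, hswap, hRHS]

lemma kernel_integral_value {α : ℝ} (h0 : 0 < α) (h1 : α < 1) :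
    (∫ u in Ioi (0:ℝ), u ^ (-α - 1) * Real.sin u)
      = π / (2 * Real.cos (α * π / 2) * Real.Gamma (1 + α)) := by
  have hcos : 0 < Real.cos (α * π / 2) := by
    apply Real.cos_pos_of_mem_Ioo
    constructor
    · nlinarith [Real.pi_pos]
    · nlinarith [Real.pi_pos]
  have hΓ : 0 < Real.Gamma (α + 1) := Real.Gamma_pos_of_pos (by linarith)
  set a : ℝ := (α + 1) / 2 with ha
  have ha0 : 0 < a := by rw [ha]; linarith
  have ha1 : a < 1 := by rw [ha]; linarith
  -- substitution x ↦ x^2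
  have hsub := integral_comp_rpow_Ioi_of_pos
    (g := fun y : ℝ => y ^ (a - 1) / (1 + y)) (p := 2) two_pos
  have hL : (∫ x in Ioi (0:ℝ), ((2:ℝ) * x ^ ((2:ℝ) - 1)) • ((x ^ (2:ℝ)) ^ (a - 1) / (1 + x ^ (2:ℝ))))
      = 2 * ∫ t in Ioi (0:ℝ), t ^ α / (t ^ 2 + 1) := by
    rw [← integral_const_mul]
    refine setIntegral_congr_fun measurableSet_Ioi (fun x hx => ?_)
    have hx0 : (0:ℝ) < x := hx
    have e2 : (x ^ (2:ℝ)) ^ (a - 1) = x ^ (α - 1) := by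
      rw [← Real.rpow_mul hx0.le]
      congr 1
      rw [ha]; ring
    have e3 : x ^ (2:ℝ) = x ^ 2 := by
      rw [show (2:ℝ) = ((2:ℕ):ℝ) by norm_num, Real.rpow_natCast]
    rw [smul_eq_mul, e2, e3, show (2:ℝ) - 1 = 1 by norm_num, Real.rpow_one,
      add_comm (1:ℝ) (x ^ 2), mul_assoc]
    congr 1
    rw [mul_div_assoc']
    congr 1
    nth_rewrite 1 [← Real.rpow_one x]
    rw [← Real.rpow_add hx0]
    congr 1
    ring
  have hK : 2 * (∫ t in Ioi (0:ℝ), t ^ α / (t ^ 2 + 1))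
      = ∫ y in Ioi (0:ℝ), y ^ (a - 1) / (1 + y) := hL.symm.trans hsub
  have hr : Real.Gamma a * Real.Gamma (1 - a) = π / Real.cos (α * π / 2) := by
    rw [Real.Gamma_mul_Gamma_one_sub]
    congr 1
    rw [show π * a = α * π / 2 + π / 2 by rw [ha]; ring, Real.sin_add_pi_div_two]
  have h2J : 2 * (∫ t in Ioi (0:ℝ), t ^ α / (t ^ 2 + 1)) = π / Real.cos (α * π / 2) :=
    hK.trans ((beta_reflection ha0 ha1).trans hr)
  rw [eq_div_iff hcos.ne'] at h2J
  have hIC := fubini_one h0 h1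
  rw [show (1:ℝ) + α = α + 1 by ring, eq_div_iff (by positivity)]
  linear_combination 2 * Real.cos (α * π / 2) * hIC + h2J

lemma main_calc {α lo : ℝ} (h0 : 0 < α) (h1 : α < 1) (hlo : 0 < lo)
    {A : ℝ → ℝ}
    (hA : ∀ ρ : ℝ, 0 < ρ → A ρ = ∫ u in (0:ℝ)..(ρ / lo), u ^ (-α - 1) * Real.sin u)
    {c : ℝ} (hc : 0 < c) :
    Tendsto (fun z : ℝ => z ^ (3 - α) *
      (z ^ (α - 1) * A z - (z ^ 2 + c) ^ ((α - 1) / 2) * A (Real.sqrt (z ^ 2 + c)))) atTop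
      (nhds ((∫ u in Ioi (0:ℝ), u ^ (-α - 1) * Real.sin u) * ((1 - α) * c / 2))) := by
  set I : ℝ := ∫ u in Ioi (0:ℝ), u ^ (-α - 1) * Real.sin u with hIdef
  have hα1 : α - 1 ≠ 0 := by intro h; linarith [sub_eq_zero.mp h]
  -- tail bound for A
  have hAtail : ∀ t : ℝ, 0 < t → |A t - I| ≤ lo ^ α * t ^ (-α) / α := by
    intro t ht
    have hT : 0 < t / lo := div_pos ht hlo
    have hsplit := kernel_split h0 h1 hT
    have hAeq : A t = ∫ u in Ioc (0:ℝ) (t / lo), u ^ (-α - 1) * Real.sin u := by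
      rw [hA t ht, intervalIntegral.integral_of_le hT.le]
    have hdiff : A t - I = -(∫ u in Ioi (t / lo), u ^ (-α - 1) * Real.sin u) := by
      rw [hAeq, hIdef, hsplit]; ring
    rw [hdiff, abs_neg]
    refine (kernel_tail_bound h0 h1 hT).trans (le_of_eq ?_)
    have e : (t / lo) ^ (-α) = lo ^ α * t ^ (-α) := by
      rw [Real.div_rpow ht.le hlo.le, Real.rpow_neg hlo.le, div_eq_mul_inv, inv_inv, mul_comm]
    rw [e]
  -- derivative of A
  have hAderiv : ∀ t : ℝ, 0 < t →
      HasDerivAt A ((t / lo) ^ (-α - 1) * Real.sin (t / lo) * (1 / lo)) t := by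
    intro t ht
    have hT : 0 < t / lo := div_pos ht hlo
    have hii : IntervalIntegrable (fun u : ℝ => u ^ (-α - 1) * Real.sin u) volume 0 (t / lo) := by
      rw [intervalIntegrable_iff_integrableOn_Ioc_of_le hT.le]
      exact (kernel_integrable h0 h1).mono_set Ioc_subset_Ioi_self
    have hsm := ContinuousAt.stronglyMeasurableAtFilter (s := Ioi (0:ℝ)) (μ := volume)
      isOpen_Ioi (fun y hy => kernel_cont (α := α) y (ne_of_gt hy)) (t / lo) hT
    have hG : HasDerivAt (fun y : ℝ => ∫ u in (0:ℝ)..y, u ^ (-α - 1) * Real.sin u)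
        ((t / lo) ^ (-α - 1) * Real.sin (t / lo)) (t / lo) :=
      intervalIntegral.integral_hasDerivAt_right hii hsm (kernel_cont _ (ne_of_gt hT))
    have hy : HasDerivAt (fun ρ : ℝ => ρ / lo) (1 / lo) t := by
      simpa using (hasDerivAt_id t).div_const lo
    have hcomp := HasDerivAt.comp t hG hy
    refine hcomp.congr_of_eventuallyEq ?_
    filter_upwards [IsOpen.mem_nhds isOpen_Ioi ht] with ρ hρ
    exact hA ρ hρ
  have hAcont : ∀ t : ℝ, 0 < t → ContinuousAt A t := fun t ht => (hAderiv t ht).continuousAt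
  -- algebraic identity for derivative of g
  have key2 : ∀ t : ℝ, 0 < t →
      t ^ (α - 1) * ((t / lo) ^ (-α - 1) * Real.sin (t / lo) * (1 / lo))
        = lo ^ α * (t ^ (-2:ℝ) * Real.sin (t / lo)) := by
    intro t ht
    have e1 : (t / lo) ^ (-α - 1) = t ^ (-α - 1) * lo ^ (α + 1) := by
      rw [Real.div_rpow ht.le hlo.le, div_eq_mul_inv, ← Real.rpow_neg hlo.le]
      congr 1
      ring
    have e2 : t ^ (α - 1) * t ^ (-α - 1) = t ^ (-2:ℝ) := by
      rw [← Real.rpow_add ht]; congr 1; ring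
    have e3 : lo ^ (α + 1) * (1 / lo) = lo ^ α := by
      nth_rewrite 2 [← Real.rpow_one lo]
      rw [one_div, ← Real.rpow_neg hlo.le, ← Real.rpow_add hlo]
      congr 1; ring
    rw [e1]
    calc t ^ (α - 1) * (t ^ (-α - 1) * lo ^ (α + 1) * Real.sin (t / lo) * (1 / lo))
        = (t ^ (α - 1) * t ^ (-α - 1)) * (lo ^ (α + 1) * (1 / lo)) * Real.sin (t / lo) := by ring
      _ = lo ^ α * (t ^ (-2:ℝ) * Real.sin (t / lo)) := by rw [e2, e3]; ring
  -- derivative of g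
  have hgd : ∀ t : ℝ, 0 < t → HasDerivAt (fun t : ℝ => t ^ (α - 1) * A t)
      ((α - 1) * (t ^ (α - 2) * A t) + lo ^ α * (t ^ (-2:ℝ) * Real.sin (t / lo))) t := by
    intro t ht
    have h₁ : HasDerivAt (fun t : ℝ => t ^ (α - 1)) ((α - 1) * t ^ (α - 1 - 1)) t :=
      Real.hasDerivAt_rpow_const (Or.inl ht.ne')
    have h₃ := h₁.mul (hAderiv t ht)
    refine h₃.congr_deriv ?_
    rw [show α - 1 - 1 = α - 2 by ring, key2 t ht]
    ring
  -- M limit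
  have hM : Tendsto (fun z : ℝ => z ^ (3 - α) * (z ^ (α - 1) - Real.sqrt (z ^ 2 + c) ^ (α - 1)))
      atTop (nhds ((1 - α) * c / 2)) := by
    have hβder : HasDerivAt (fun x : ℝ => (1 + x) ^ ((α - 1) / 2)) ((α - 1) / 2) 0 := by
      have h1 : HasDerivAt (fun x : ℝ => 1 + x) 1 0 := by
        simpa using (hasDerivAt_id (0:ℝ)).const_add (1:ℝ)
      have h2 : HasDerivAt (fun y : ℝ => y ^ ((α - 1) / 2))
          ((α - 1) / 2 * ((1:ℝ) + 0) ^ ((α - 1) / 2 - 1)) ((1:ℝ) + 0) :=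
        Real.hasDerivAt_rpow_const (Or.inl (by norm_num))
      have hh := h2.comp (0:ℝ) h1
      exact hh.congr_deriv (by simp)
    have hslope := hasDerivAt_iff_tendsto_slope.mp hβder
    have hslope' : Tendsto (fun x : ℝ => (1 - (1 + x) ^ ((α - 1) / 2)) / x)
        (nhdsWithin 0 {x | x ≠ 0}) (nhds (-((α - 1) / 2))) := by
      refine (hslope.neg).congr (fun x => ?_)
      rw [slope_def_field]
      simp [Real.one_rpow]
      ring
    have hε : Tendsto (fun z : ℝ => c / z ^ 2) atTop (nhdsWithin 0 {x | x ≠ 0}) := by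
      refine tendsto_nhdsWithin_of_tendsto_nhds_of_eventually_within _ ?_ ?_
      · have h2 : Tendsto (fun z : ℝ => z ^ 2) atTop atTop := tendsto_pow_atTop two_ne_zero
        have h3 := h2.inv_tendsto_atTop.const_mul c
        simpa [div_eq_mul_inv] using h3
      · filter_upwards [eventually_gt_atTop 0] with z hz
        exact ne_of_gt (by positivity)
    have hcomp := (hslope'.comp hε).const_mul c
    have hval : c * -((α - 1) / 2) = (1 - α) * c / 2 := by ring
    rw [hval] at hcomp
    refine Tendsto.congr' ?_ hcomp
    filter_upwards [eventually_gt_atTop 0] with z hz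
    have hz2 : (0:ℝ) < z ^ 2 := by positivity
    have hz2c : (0:ℝ) < z ^ 2 + c := by positivity
    have hεne : c / z ^ 2 ≠ 0 := ne_of_gt (by positivity)
    -- sqrt(z²+c)^(α-1) = z^(α-1) * (1+c/z²)^((α-1)/2)
    have hsq : Real.sqrt (z ^ 2 + c) ^ (α - 1) = (z ^ 2 + c) ^ ((α - 1) / 2) := by
      rw [Real.sqrt_eq_rpow, ← Real.rpow_mul hz2c.le]
      congr 1; ring
    have hzrp : z ^ (α - 1) = (z ^ 2) ^ ((α - 1) / 2) := by
      rw [← Real.rpow_natCast z 2, ← Real.rpow_mul hz.le]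
      congr 1
      push_cast; ring
    have hrdec : Real.sqrt (z ^ 2 + c) ^ (α - 1)
        = z ^ (α - 1) * (1 + c / z ^ 2) ^ ((α - 1) / 2) := by
      rw [hsq, hzrp, ← Real.mul_rpow hz2.le (by positivity)]
      congr 1
      field_simp
    have hz2eq : z ^ (3 - α) * z ^ (α - 1) = z ^ 2 := by
      rw [← Real.rpow_add hz, show 3 - α + (α - 1) = (2:ℝ) by ring,
        show (2:ℝ) = ((2:ℕ):ℝ) by norm_num, Real.rpow_natCast]
    show c * ((1 - (1 + c / z ^ 2) ^ ((α - 1) / 2)) / (c / z ^ 2))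
        = z ^ (3 - α) * (z ^ (α - 1) - Real.sqrt (z ^ 2 + c) ^ (α - 1))
    rw [hrdec, mul_sub, hz2eq, ← mul_assoc, hz2eq]
    field_simp
  -- error term bound
  have hEbound : ∀ z : ℝ, 0 < z →
      |z ^ (3 - α) * ((1 - α) * (∫ t in z..Real.sqrt (z ^ 2 + c), t ^ (α - 2) * (A t - I))
        - lo ^ α * ∫ t in z..Real.sqrt (z ^ 2 + c), t ^ (-2:ℝ) * Real.sin (t / lo))|
      ≤ ((1 - α) * lo ^ α / α + lo ^ α) * (c / 2) * z ^ (-α) := by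
    intro z hz
    have hz2c : (0:ℝ) < z ^ 2 + c := by positivity
    set r : ℝ := Real.sqrt (z ^ 2 + c) with hr
    have hr0 : 0 < r := Real.sqrt_pos.mpr hz2c
    have hr2 : r ^ 2 = z ^ 2 + c := Real.sq_sqrt hz2c.le
    have hzr : z ≤ r := by nlinarith [hr2, hr0]
    have hrz' : r - z ≤ c / (2 * z) := by
      rw [le_div_iff₀ (by positivity : (0:ℝ) < 2 * z)]
      nlinarith [sq_nonneg (r - z), hr2]
    have hb1 : |∫ t in z..r, t ^ (α - 2) * (A t - I)|
        ≤ z ^ (α - 2) * (lo ^ α * z ^ (-α) / α) * |r - z| := by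
      rw [← Real.norm_eq_abs]
      refine intervalIntegral.norm_integral_le_of_norm_le_const (fun t ht' => ?_)
      rw [Set.uIoc_of_le hzr] at ht'
      have ht0 : 0 < t := hz.trans ht'.1
      rw [norm_mul, Real.norm_rpow_of_nonneg ht0.le, Real.norm_eq_abs, Real.norm_eq_abs,
        abs_of_pos ht0]
      refine mul_le_mul ?_ ?_ (abs_nonneg _) (by positivity)
      · exact Real.rpow_le_rpow_of_nonpos hz ht'.1.le (by linarith)
      · refine (hAtail t ht0).trans ?_
        refine (div_le_div_iff_of_pos_right h0).mpr ?_
        exact mul_le_mul_of_nonneg_left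
          (Real.rpow_le_rpow_of_nonpos hz ht'.1.le (by linarith))
          (Real.rpow_nonneg hlo.le α)
    have hb2 : |∫ t in z..r, t ^ (-2:ℝ) * Real.sin (t / lo)| ≤ z ^ (-2:ℝ) * |r - z| := by
      rw [← Real.norm_eq_abs]
      refine intervalIntegral.norm_integral_le_of_norm_le_const (fun t ht' => ?_)
      rw [Set.uIoc_of_le hzr] at ht'
      have ht0 : 0 < t := hz.trans ht'.1
      rw [norm_mul, Real.norm_rpow_of_nonneg ht0.le, Real.norm_eq_abs, Real.norm_eq_abs,
        abs_of_pos ht0]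
      calc t ^ (-2:ℝ) * |Real.sin (t / lo)| ≤ t ^ (-2:ℝ) * 1 :=
          mul_le_mul_of_nonneg_left (abs_le.mpr ⟨Real.neg_one_le_sin _, Real.sin_le_one _⟩)
            (Real.rpow_nonneg ht0.le _)
        _ = t ^ (-2:ℝ) := mul_one _
        _ ≤ z ^ (-2:ℝ) := Real.rpow_le_rpow_of_nonpos hz ht'.1.le (by norm_num)
    have habs : |r - z| ≤ c / (2 * z) := by
      rw [abs_of_nonneg (by linarith)]
      exact hrz'
    have hq1 : 0 ≤ z ^ (α - 2) * (lo ^ α * z ^ (-α) / α) := by positivity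
    have hq2 : 0 ≤ z ^ (-2:ℝ) := by positivity
    calc |z ^ (3 - α) * ((1 - α) * (∫ t in z..r, t ^ (α - 2) * (A t - I))
          - lo ^ α * ∫ t in z..r, t ^ (-2:ℝ) * Real.sin (t / lo))|
        = z ^ (3 - α) * |(1 - α) * (∫ t in z..r, t ^ (α - 2) * (A t - I))
          - lo ^ α * ∫ t in z..r, t ^ (-2:ℝ) * Real.sin (t / lo)| := by
          rw [abs_mul, abs_of_nonneg (Real.rpow_nonneg hz.le _)]
      _ ≤ z ^ (3 - α) * ((1 - α) * (z ^ (α - 2) * (lo ^ α * z ^ (-α) / α) * (c / (2 * z)))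
          + lo ^ α * (z ^ (-2:ℝ) * (c / (2 * z)))) := by
          refine mul_le_mul_of_nonneg_left ?_ (Real.rpow_nonneg hz.le _)
          refine (abs_sub _ _).trans ?_
          refine add_le_add ?_ ?_
          · rw [abs_mul, abs_of_nonneg (by linarith : (0:ℝ) ≤ 1 - α)]
            refine mul_le_mul_of_nonneg_left ?_ (by linarith)
            exact hb1.trans (mul_le_mul_of_nonneg_left habs hq1)
          · rw [abs_mul, abs_of_nonneg (Real.rpow_nonneg hlo.le α)]
            refine mul_le_mul_of_nonneg_left ?_ (Real.rpow_nonneg hlo.le α)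
            exact hb2.trans (mul_le_mul_of_nonneg_left habs hq2)
      _ = ((1 - α) * lo ^ α / α + lo ^ α) * (c / 2) * z ^ (-α) := by
          have hcz : c / (2 * z) = c / 2 * z ^ (-1:ℝ) := by
            rw [Real.rpow_neg_one]; ring
          have e1 : z ^ (3 - α) * (z ^ (α - 2) * (z ^ (-α) * z ^ (-1:ℝ))) = z ^ (-α) := by
            rw [← Real.rpow_add hz, ← Real.rpow_add hz, ← Real.rpow_add hz]; congr 1; ring
          have e2 : z ^ (3 - α) * (z ^ (-2:ℝ) * z ^ (-1:ℝ)) = z ^ (-α) := by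
            rw [← Real.rpow_add hz, ← Real.rpow_add hz]; congr 1; ring
          rw [hcz]
          linear_combination ((1 - α) * lo ^ α / α) * (c / 2) * e1 + lo ^ α * (c / 2) * e2
  -- error term tends to zero
  have hE : Tendsto (fun z : ℝ =>
      z ^ (3 - α) * ((1 - α) * (∫ t in z..Real.sqrt (z ^ 2 + c), t ^ (α - 2) * (A t - I))
        - lo ^ α * ∫ t in z..Real.sqrt (z ^ 2 + c), t ^ (-2:ℝ) * Real.sin (t / lo)))
      atTop (nhds 0) := by
    have hb : ∀ᶠ z : ℝ in atTop, ‖z ^ (3 - α) * ((1 - α) *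
          (∫ t in z..Real.sqrt (z ^ 2 + c), t ^ (α - 2) * (A t - I))
        - lo ^ α * ∫ t in z..Real.sqrt (z ^ 2 + c), t ^ (-2:ℝ) * Real.sin (t / lo))‖
        ≤ ((1 - α) * lo ^ α / α + lo ^ α) * (c / 2) * z ^ (-α) := by
      filter_upwards [eventually_gt_atTop 0] with z hz
      rw [Real.norm_eq_abs]
      exact hEbound z hz
    have hg : Tendsto (fun z : ℝ => ((1 - α) * lo ^ α / α + lo ^ α) * (c / 2) * z ^ (-α))
        atTop (nhds 0) := by
      have := (tendsto_rpow_neg_atTop h0).const_mul (((1 - α) * lo ^ α / α + lo ^ α) * (c / 2))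
      simpa [mul_assoc] using this
    exact squeeze_zero_norm' hb hg
  -- pointwise identity
  have hident : ∀ z : ℝ, 0 < z →
      z ^ (3 - α) * (z ^ (α - 1) * A z - (z ^ 2 + c) ^ ((α - 1) / 2) * A (Real.sqrt (z ^ 2 + c)))
      = I * (z ^ (3 - α) * (z ^ (α - 1) - Real.sqrt (z ^ 2 + c) ^ (α - 1)))
        + z ^ (3 - α) * ((1 - α) * (∫ t in z..Real.sqrt (z ^ 2 + c), t ^ (α - 2) * (A t - I))
          - lo ^ α * ∫ t in z..Real.sqrt (z ^ 2 + c), t ^ (-2:ℝ) * Real.sin (t / lo)) := by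
    intro z hz
    have hz2c : (0:ℝ) < z ^ 2 + c := by positivity
    set r : ℝ := Real.sqrt (z ^ 2 + c) with hr
    have hr0 : 0 < r := Real.sqrt_pos.mpr hz2c
    have hr2 : r ^ 2 = z ^ 2 + c := Real.sq_sqrt hz2c.le
    have hzr : z ≤ r := by nlinarith [hr2, hr0]
    have hIcc : Set.uIcc z r = Set.Icc z r := Set.uIcc_of_le hzr
    have hsq : r ^ (α - 1) = (z ^ 2 + c) ^ ((α - 1) / 2) := by
      rw [hr, Real.sqrt_eq_rpow, ← Real.rpow_mul hz2c.le]
      congr 1; ring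
    -- FTC
    have hder : ∀ t ∈ Set.uIcc z r, HasDerivAt (fun t : ℝ => t ^ (α - 1) * A t)
        ((α - 1) * (t ^ (α - 2) * A t) + lo ^ α * (t ^ (-2:ℝ) * Real.sin (t / lo))) t := by
      intro t ht
      rw [hIcc] at ht
      exact hgd t (lt_of_lt_of_le hz ht.1)
    have hcder : ContinuousOn (fun t : ℝ =>
        (α - 1) * (t ^ (α - 2) * A t) + lo ^ α * (t ^ (-2:ℝ) * Real.sin (t / lo)))
        (Set.uIcc z r) := by
      intro t ht
      rw [hIcc] at ht
      have ht0 : 0 < t := lt_of_lt_of_le hz ht.1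
      exact ((continuousAt_const.mul ((Real.continuousAt_rpow_const t (α - 2)
        (Or.inl ht0.ne')).mul (hAcont t ht0))).add
        (continuousAt_const.mul ((Real.continuousAt_rpow_const t (-2:ℝ)
          (Or.inl ht0.ne')).mul
          ((Real.continuous_sin.comp (continuous_id.div_const lo)).continuousAt)))).continuousWithinAt
    have hftc := intervalIntegral.integral_eq_sub_of_hasDerivAt hder hcder.intervalIntegrable
    have hpos_on : ∀ t ∈ Set.uIcc z r, (0:ℝ) < t := by
      intro t ht; rw [hIcc] at ht; exact lt_of_lt_of_le hz ht.1
    have hi1 : IntervalIntegrable (fun t : ℝ => t ^ (α - 2) * A t) volume z r := by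
      refine ContinuousOn.intervalIntegrable (fun t ht => ?_)
      have ht0 := hpos_on t ht
      exact ((Real.continuousAt_rpow_const t (α - 2) (Or.inl ht0.ne')).mul
        (hAcont t ht0)).continuousWithinAt
    have hi2 : IntervalIntegrable (fun t : ℝ => t ^ (-2:ℝ) * Real.sin (t / lo)) volume z r := by
      refine ContinuousOn.intervalIntegrable (fun t ht => ?_)
      have ht0 := hpos_on t ht
      exact ((Real.continuousAt_rpow_const t (-2:ℝ) (Or.inl ht0.ne')).mul
        ((Real.continuous_sin.comp (continuous_id.div_const lo)).continuousAt)).continuousWithinAt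
    have hi3 : IntervalIntegrable (fun t : ℝ => t ^ (α - 2)) volume z r := by
      refine ContinuousOn.intervalIntegrable (fun t ht => ?_)
      have ht0 := hpos_on t ht
      exact (Real.continuousAt_rpow_const t (α - 2) (Or.inl ht0.ne')).continuousWithinAt
    have hi4 : IntervalIntegrable (fun t : ℝ => t ^ (α - 2) * (A t - I)) volume z r := by
      refine ContinuousOn.intervalIntegrable (fun t ht => ?_)
      have ht0 := hpos_on t ht
      exact ((Real.continuousAt_rpow_const t (α - 2) (Or.inl ht0.ne')).mul
        ((hAcont t ht0).sub continuousAt_const)).continuousWithinAt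
    have hsplit2 : (∫ t in z..r, ((α - 1) * (t ^ (α - 2) * A t)
          + lo ^ α * (t ^ (-2:ℝ) * Real.sin (t / lo))))
        = (α - 1) * (∫ t in z..r, t ^ (α - 2) * A t)
          + lo ^ α * ∫ t in z..r, t ^ (-2:ℝ) * Real.sin (t / lo) := by
      rw [intervalIntegral.integral_add (hi1.const_mul _) (hi2.const_mul _),
        intervalIntegral.integral_const_mul, intervalIntegral.integral_const_mul]
    have hPdecomp : (∫ t in z..r, t ^ (α - 2) * A t)
        = I * (∫ t in z..r, t ^ (α - 2)) + ∫ t in z..r, t ^ (α - 2) * (A t - I) := by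
      rw [← intervalIntegral.integral_const_mul,
        ← intervalIntegral.integral_add (hi3.const_mul I) hi4]
      refine intervalIntegral.integral_congr (fun t _ => ?_)
      ring
    have h0notin : (0:ℝ) ∉ Set.uIcc z r := by
      rw [hIcc]
      rintro ⟨h9, -⟩
      linarith
    have hP3 : (α - 1) * (∫ t in z..r, t ^ (α - 2)) = r ^ (α - 1) - z ^ (α - 1) := by
      rw [integral_rpow (Or.inr ⟨by intro h9; linarith [h9], h0notin⟩)]
      rw [show α - 2 + 1 = α - 1 by ring]
      field_simp
    have hkey : (α - 1) * (I * (∫ t in z..r, t ^ (α - 2))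
          + ∫ t in z..r, t ^ (α - 2) * (A t - I))
          + lo ^ α * (∫ t in z..r, t ^ (-2:ℝ) * Real.sin (t / lo))
        = r ^ (α - 1) * A r - z ^ (α - 1) * A z := by
      have h11 := hftc
      rw [hsplit2, hPdecomp] at h11
      exact h11
    rw [← hsq]
    linear_combination (z ^ (3 - α)) * hkey + (-(I * z ^ (3 - α))) * hP3
  -- conclusion
  have hsum := (hM.const_mul I).add hE
  rw [add_zero] at hsum
  refine Tendsto.congr' ?_ hsum
  filter_upwards [eventually_gt_atTop 0] with z hz
  exact (hident z hz).symm

/-- Let `α ∈ (0,1)`, `χ_α > 0`, `l_o > 0`, `X ∈ ℝ²` with `X ≠ 0`.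
With `A(ρ) = ∫_0^{ρ/l_o} u^{-α-1} sin u du` (for `ρ > 0`) and
`F(z) = (χ_α/π²)[z^{α-1} A(z) - (z² + |X|²)^{(α-1)/2} A(√(z²+|X|²))]` (for `z > 0`),
one has `lim_{z→∞} z^{3-α} F(z) = C_α (1-α)|X|²/(2π²)`,
where `C_α = π χ_α/(2 cos(απ/2) Γ(1+α))`. -/
theorem stmt3 (α χ lo : ℝ) (h0 : 0 < α) (h1 : α < 1) (hχ : 0 < χ) (hlo : 0 < lo)
    (X : EuclideanSpace ℝ (Fin 2)) (hX : X ≠ 0)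
    (A F : ℝ → ℝ)
    (hA : ∀ ρ : ℝ, 0 < ρ → A ρ = ∫ u in (0:ℝ)..(ρ / lo), u ^ (-α - 1) * Real.sin u)
    (hF : ∀ z : ℝ, 0 < z → F z = (χ / π ^ 2) *
      (z ^ (α - 1) * A z -
        (z ^ 2 + ‖X‖ ^ 2) ^ ((α - 1) / 2) * A (Real.sqrt (z ^ 2 + ‖X‖ ^ 2)))) :
    Tendsto (fun z : ℝ => z ^ (3 - α) * F z) atTop
      (nhds ((π * χ / (2 * Real.cos (α * π / 2) * Real.Gamma (1 + α))) *
        (1 - α) * ‖X‖ ^ 2 / (2 * π ^ 2))) := by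
  have hXn : 0 < ‖X‖ := norm_pos_iff.mpr hX
  have hc : (0:ℝ) < ‖X‖ ^ 2 := by positivity
  have hmain := main_calc h0 h1 hlo hA hc
  have hcos : 0 < Real.cos (α * π / 2) := by
    apply Real.cos_pos_of_mem_Ioo
    constructor
    · nlinarith [Real.pi_pos]
    · nlinarith [Real.pi_pos]
  have hΓ : 0 < Real.Gamma (1 + α) := Real.Gamma_pos_of_pos (by linarith)
  have hπ : (π:ℝ) ≠ 0 := Real.pi_ne_zero
  have hval : (χ / π ^ 2) * ((∫ u in Ioi (0:ℝ), u ^ (-α - 1) * Real.sin u)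
        * ((1 - α) * ‖X‖ ^ 2 / 2))
      = (π * χ / (2 * Real.cos (α * π / 2) * Real.Gamma (1 + α)))
        * (1 - α) * ‖X‖ ^ 2 / (2 * π ^ 2) := by
    rw [kernel_integral_value h0 h1]
    field_simp
  rw [← hval]
  have hmul := hmain.const_mul (χ / π ^ 2)
  refine Tendsto.congr' ?_ hmul
  filter_upwards [eventually_gt_atTop 0] with z hz
  rw [hF z hz]
  ring
end

section
/- For α ∈ (0,2), define Ψ_α: ℝ² → ℝ by Ψ_α(ξ) = (1/(2π)²) ∫_{ℝ²} cos(η·ξ) e^{−|η|^α/4} dη. Then Ψ_α(0) = 2^{4/α} Γ(2/α) / (2πα), and lim_{ξ→0, ξ≠0} ( Ψ_α(0) − Ψ_α(ξ) ) / |ξ|² = Ψ_α(0) · q_α, where q_α = 2^{4/α−2} Γ(4/α) / Γ(2/α). -/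
open MeasureTheory Real Filter
open scoped RealInnerProductSpace

noncomputable abbrev stmt13E := EuclideanSpace ℝ (Fin 2)

/-- rotation by 90 degrees -/
noncomputable def stmt13rot : stmt13E ≃ₗᵢ[ℝ] stmt13E :=
{ toFun := fun x => WithLp.toLp 2 ![-x 1, x 0]
  invFun := fun x => WithLp.toLp 2 ![x 1, -x 0]
  map_add' := by intro x y; ext i; fin_cases i <;> simp <;> ring
  map_smul' := by intro c x; ext i; fin_cases i <;> simp
  left_inv := by intro x; ext i; fin_cases i <;> simp
  right_inv := by intro x; ext i; fin_cases i <;> simp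
  norm_map' := by
    intro x
    rw [EuclideanSpace.norm_eq, EuclideanSpace.norm_eq]
    congr 1
    simp [Fin.sum_univ_two, abs_neg]
    ring }

lemma stmt13_tendsto_aux (α : ℝ) (h0 : 0 < α) (k : ℕ) :
    Tendsto (fun t : ℝ => (1 + t) ^ 3 * (t ^ k * Real.exp (-t ^ α / 4))) atTop (nhds 0) := by
  have key : Tendsto (fun t : ℝ => t ^ ((k + 3 : ℝ) / α) * Real.exp (-(1/4) * t)) atTop (nhds 0) :=
    tendsto_rpow_mul_exp_neg_mul_atTop_nhds_zero _ _ (by norm_num)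
  have comp : Tendsto (fun t : ℝ => (t ^ α) ^ ((k + 3 : ℝ)/α) * Real.exp (-(1/4) * t ^ α))
      atTop (nhds 0) := key.comp (tendsto_rpow_atTop h0)
  have comp' : Tendsto (fun t : ℝ => t ^ (k + 3 : ℝ) * Real.exp (-t ^ α / 4)) atTop (nhds 0) := by
    apply comp.congr'
    filter_upwards [eventually_gt_atTop 0] with t ht
    rw [← Real.rpow_mul ht.le, mul_comm α, div_mul_cancel₀ _ h0.ne']
    ring_nf
  have h8 : Tendsto (fun t : ℝ => 8 * (t ^ (k + 3 : ℝ) * Real.exp (-t ^ α / 4)))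
      atTop (nhds 0) := by simpa using (comp'.const_mul (8:ℝ))
  apply squeeze_zero' ?_ ?_ h8
  · filter_upwards [eventually_ge_atTop 1] with t ht
    positivity
  · filter_upwards [eventually_ge_atTop 1] with t ht
    have h1 : (1 + t) ^ 3 ≤ (2 * t) ^ 3 := by
      apply pow_le_pow_left₀ (by linarith) (by linarith)
    calc (1 + t) ^ 3 * (t ^ k * Real.exp (-t ^ α / 4))
        ≤ (2*t) ^ 3 * (t ^ k * Real.exp (-t ^ α / 4)) := by
          apply mul_le_mul_of_nonneg_right h1 (by positivity)
      _ = 8 * (t ^ (k+3:ℕ) * Real.exp (-t ^ α / 4)) := by ring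
      _ = 8 * (t ^ ((k+3:ℕ):ℝ) * Real.exp (-t ^ α / 4)) := by rw [Real.rpow_natCast]
      _ = 8 * (t ^ ((k:ℝ) + 3) * Real.exp (-t ^ α / 4)) := by norm_num

lemma stmt13_cont_f (α : ℝ) (h0 : 0 < α) :
    Continuous (fun η : stmt13E => Real.exp (-‖η‖ ^ α / 4)) := by
  fun_prop (disch := exact h0.le)

lemma stmt13_integrable (α : ℝ) (h0 : 0 < α) (k : ℕ) :
    Integrable (fun η : stmt13E => ‖η‖ ^ k * Real.exp (-‖η‖ ^ α / 4)) := by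
  obtain ⟨T, hT⟩ := (Filter.eventually_atTop).mp
    ((stmt13_tendsto_aux α h0 k).eventually (eventually_le_nhds (show (0:ℝ) < 1 by norm_num)))
  set T' := max T 0 with hT'
  have hcomp : IsCompact (Set.Icc (0:ℝ) T') := isCompact_Icc
  have hcont : ContinuousOn (fun t : ℝ => (1 + t) ^ 3 * (t ^ k * Real.exp (-t ^ α / 4)))
      (Set.Icc 0 T') := by
    apply ContinuousOn.mul (by fun_prop)
    apply ContinuousOn.mul (by fun_prop)
    apply ContinuousOn.rexp
    apply ContinuousOn.div_const
    apply ContinuousOn.neg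
    exact fun t ht => (Real.continuousAt_rpow_const t α (Or.inr h0.le)).continuousWithinAt
  obtain ⟨C0, hC0⟩ := hcomp.exists_bound_of_continuousOn hcont
  set C := max C0 1 with hC
  have hbound : ∀ t : ℝ, 0 ≤ t → (1 + t) ^ 3 * (t ^ k * Real.exp (-t ^ α / 4)) ≤ C := by
    intro t ht
    rcases le_total t T' with h | h
    · exact le_trans (le_trans (le_abs_self _) (hC0 t ⟨ht, h⟩)) (le_max_left _ _)
    · exact le_trans (hT t (le_trans (le_max_left _ _) h)) (le_max_right _ _)
  have hint : Integrable (fun η : stmt13E => C * (1 + ‖η‖) ^ (-(3:ℝ))) :=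
    (integrable_one_add_norm (by norm_num [finrank_euclideanSpace_fin])).const_mul C
  apply hint.mono ((continuous_norm.pow k).mul (stmt13_cont_f α h0)).aestronglyMeasurable
  filter_upwards with η
  simp only [Pi.mul_apply, Pi.pow_apply, Function.comp_apply]
  have h1 : (0:ℝ) < 1 + ‖η‖ := by positivity
  rw [Real.norm_eq_abs, Real.norm_eq_abs, abs_of_nonneg (by positivity),
    abs_of_nonneg (by positivity)]
  have h3 : (1+‖η‖) ^ (-(3:ℝ)) = ((1+‖η‖)^(3:ℕ))⁻¹ := by
    rw [Real.rpow_neg h1.le, show ((3:ℝ))=((3:ℕ):ℝ) by norm_num, Real.rpow_natCast]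
  rw [h3, ← div_eq_mul_inv, le_div_iff₀ (by positivity)]
  calc ‖η‖ ^ k * rexp (-‖η‖ ^ α / 4) * (1 + ‖η‖) ^ 3
      = (1 + ‖η‖) ^ 3 * (‖η‖ ^ k * rexp (-‖η‖ ^ α / 4)) := by ring
    _ ≤ C := hbound _ (norm_nonneg _)

lemma stmt13_J_val (α : ℝ) (h0 : 0 < α) (k : ℕ) :
    ∫ η : stmt13E, ‖η‖ ^ k * Real.exp (-‖η‖ ^ α / 4)
      = 2 * π * (4:ℝ) ^ (((k:ℝ)+2)/α) * Real.Gamma (((k:ℝ)+2)/α) / α := by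
  have h := integral_fun_norm_addHaar (volume : Measure stmt13E)
    (fun r : ℝ => r ^ k * Real.exp (-r ^ α / 4))
  simp only [finrank_euclideanSpace_fin] at h
  rw [h]
  have hball : ((volume : Measure stmt13E) (Metric.ball 0 1)).toReal = π := by
    rw [EuclideanSpace.volume_ball]
    simp only [Fintype.card_fin]
    rw [show ((2:ℕ):ℝ)/2 + 1 = 2 by norm_num, Real.Gamma_two, div_one,
      Real.sq_sqrt Real.pi_nonneg]
    simp [ENNReal.toReal_ofReal Real.pi_nonneg]
  rw [measureReal_def, hball]
  have hinner : ∫ y in Set.Ioi (0:ℝ), y ^ (2-1:ℕ) • (y ^ k * Real.exp (-y ^ α / 4))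
      = ∫ y in Set.Ioi (0:ℝ), y ^ ((k:ℝ)+1) * Real.exp (-(1/4) * y ^ α) := by
    refine setIntegral_congr_fun measurableSet_Ioi (fun y hy => ?_)
    simp only [smul_eq_mul, pow_one]
    rw [show ((k:ℝ)+1) = ((k+1:ℕ):ℝ) by push_cast; ring, Real.rpow_natCast]
    ring_nf
  rw [hinner, integral_rpow_mul_exp_neg_mul_rpow h0
    (by linarith [show (0:ℝ) ≤ k from Nat.cast_nonneg k]) (by norm_num)]
  rw [show (-((k:ℝ)+1+1)/α) = -(((k:ℝ)+2)/α) by ring, show ((k:ℝ)+1+1) = ((k:ℝ)+2) by ring]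
  rw [one_div (4:ℝ), Real.inv_rpow (by norm_num), Real.rpow_neg (by norm_num), inv_inv]
  simp only [nsmul_eq_mul, smul_eq_mul, Nat.cast_ofNat]
  field_simp

lemma cos_err (u : ℝ) : |Real.cos u - (1 - u^2/2)| ≤ 3 * u^4 := by
  rcases le_or_gt |u| 1 with h | h
  · have hb := Real.cos_bound h
    have habs : |u|^4 = u^4 := by rw [← abs_pow, abs_of_nonneg (by positivity)]
    nlinarith [pow_nonneg (abs_nonneg u) 4]
  · have h2 : 1 ≤ u^2 := by nlinarith [abs_nonneg u, sq_abs u]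
    have h4 : u^2 ≤ u^4 := by nlinarith
    have hc1 : Real.cos u ≤ 1 := Real.cos_le_one u
    have hc2 : -1 ≤ Real.cos u := Real.neg_one_le_cos u
    rw [abs_le]; constructor <;> nlinarith

lemma stmt13_norm_sq (η : stmt13E) : ‖η‖^2 = η 0 ^ 2 + η 1 ^ 2 := by
  rw [EuclideanSpace.norm_eq, Real.sq_sqrt (by positivity)]
  simp [Fin.sum_univ_two, sq_abs]

lemma stmt13_inner_eq (η ξ : stmt13E) : ⟪η, ξ⟫ = η 0 * ξ 0 + η 1 * ξ 1 := by
  simp [PiLp.inner_apply, RCLike.inner_apply, Fin.sum_univ_two]; ring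

lemma stmt13_moment (α : ℝ) (h0 : 0 < α) (ξ : stmt13E) :
    ∫ η : stmt13E, ⟪η, ξ⟫^2 * Real.exp (-‖η‖ ^ α / 4)
      = ‖ξ‖^2 * ((∫ η : stmt13E, ‖η‖^2 * Real.exp (-‖η‖ ^ α / 4))/2) := by
  set f : stmt13E → ℝ := fun η => Real.exp (-‖η‖ ^ α / 4) with hfdef
  have hfc := stmt13_cont_f α h0
  have hfnn : ∀ η, 0 ≤ f η := fun η => (Real.exp_pos _).le
  have hc0 : Continuous fun η : stmt13E => η 0 := (EuclideanSpace.proj (0 : Fin 2)).continuous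
  have hc1 : Continuous fun η : stmt13E => η 1 := (EuclideanSpace.proj (1 : Fin 2)).continuous
  have habs0 : ∀ η : stmt13E, (η 0)^2 ≤ ‖η‖^2 := fun η => by
    nlinarith [stmt13_norm_sq η, sq_nonneg (η 1)]
  have habs1 : ∀ η : stmt13E, (η 1)^2 ≤ ‖η‖^2 := fun η => by
    nlinarith [stmt13_norm_sq η, sq_nonneg (η 0)]
  have hM2 := stmt13_integrable α h0 2
  have hA : Integrable (fun η : stmt13E => (η 0)^2 * f η) := by
    apply hM2.mono (((hc0.pow 2).mul hfc).aestronglyMeasurable)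
    filter_upwards with η
    simp only [Pi.mul_apply, Pi.pow_apply, Function.comp_apply]
    rw [Real.norm_eq_abs, Real.norm_eq_abs, abs_of_nonneg (by positivity),
      abs_of_nonneg (by positivity)]
    exact mul_le_mul_of_nonneg_right (habs0 η) (hfnn η)
  have hB : Integrable (fun η : stmt13E => (η 1)^2 * f η) := by
    apply hM2.mono (((hc1.pow 2).mul hfc).aestronglyMeasurable)
    filter_upwards with η
    simp only [Pi.mul_apply, Pi.pow_apply, Function.comp_apply]
    rw [Real.norm_eq_abs, Real.norm_eq_abs, abs_of_nonneg (by positivity),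
      abs_of_nonneg (by positivity)]
    exact mul_le_mul_of_nonneg_right (habs1 η) (hfnn η)
  have hAB : Integrable (fun η : stmt13E => (η 0 * η 1) * f η) := by
    apply hM2.mono (((hc0.mul hc1).mul hfc).aestronglyMeasurable)
    filter_upwards with η
    show ‖(η 0 * η 1) * f η‖ ≤ ‖‖η‖ ^ 2 * f η‖
    rw [Real.norm_eq_abs, Real.norm_eq_abs, abs_mul, abs_of_nonneg (hfnn η),
      abs_of_nonneg (mul_nonneg (by positivity) (hfnn η))]
    apply mul_le_mul_of_nonneg_right _ (hfnn η)
    nlinarith [stmt13_norm_sq η, sq_nonneg (|η 0| - |η 1|), abs_mul (η 0) (η 1),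
      sq_abs (η 0), sq_abs (η 1), abs_nonneg (η 0), abs_nonneg (η 1), abs_nonneg (η 0 * η 1)]
  -- use rotation invariance
  have hrotint : ∀ g : stmt13E → ℝ, ∫ η, g (stmt13rot η) = ∫ η, g η := fun g =>
    stmt13rot.measurePreserving.integral_comp stmt13rot.toHomeomorph.measurableEmbedding g
  have hrotnorm : ∀ η : stmt13E, ‖stmt13rot η‖ = ‖η‖ := stmt13rot.norm_map
  have hrot0 : ∀ η : stmt13E, stmt13rot η 0 = -η 1 := fun _ => rfl
  have hrot1 : ∀ η : stmt13E, stmt13rot η 1 = η 0 := fun _ => rfl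
  have hcross : ∫ η : stmt13E, (η 0 * η 1) * f η = 0 := by
    have h := hrotint (fun η => (η 0 * η 1) * f η)
    simp only [hrot0, hrot1, hfdef, hrotnorm] at h
    have h' : ∫ η : stmt13E, -η 1 * η 0 * Real.exp (-‖η‖ ^ α / 4)
        = - ∫ η : stmt13E, (η 0 * η 1) * Real.exp (-‖η‖ ^ α / 4) := by
      rw [← integral_neg]
      congr 1; funext η; ring
    rw [h'] at h
    linarith [h]
  have hdiag : ∫ η : stmt13E, (η 1)^2 * f η = ∫ η : stmt13E, (η 0)^2 * f η := by
    have h := hrotint (fun η => (η 0)^2 * f η)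
    simp only [hrot0, hrot1, hfdef, hrotnorm] at h
    rw [← h]
    congr 1; funext η; ring
  have hsum : (∫ η : stmt13E, (η 0)^2 * f η) + (∫ η : stmt13E, (η 1)^2 * f η)
      = ∫ η : stmt13E, ‖η‖^2 * f η := by
    rw [← integral_add hA hB]
    congr 1; funext η
    rw [stmt13_norm_sq η]; ring
  have hexp : (fun η : stmt13E => ⟪η, ξ⟫^2 * f η)
      = fun η => ξ 0^2 * ((η 0)^2 * f η) + ((2*ξ 0*ξ 1) * ((η 0 * η 1) * f η)
        + ξ 1^2 * ((η 1)^2 * f η)) := by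
    funext η
    rw [stmt13_inner_eq η ξ]; ring
  have hG : Integrable (fun η : stmt13E => (2*ξ 0*ξ 1) * ((η 0 * η 1) * f η)
      + ξ 1^2 * ((η 1)^2 * f η)) := (hAB.const_mul _).add (hB.const_mul _)
  have hF : Integrable (fun η : stmt13E => ξ 0^2 * ((η 0)^2 * f η)) := hA.const_mul _
  rw [hexp, integral_add hF hG, integral_add (hAB.const_mul _) (hB.const_mul _),
    integral_const_mul _, integral_const_mul _, integral_const_mul _, hcross, hdiag,
    stmt13_norm_sq ξ]
  rw [← hsum, hdiag]
  ring

set_option maxHeartbeats 1000000 in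
/-- For `α ∈ (0,2)` let
`Ψ_α(ξ) = (1/(2π)²) ∫_{ℝ²} cos(η·ξ) e^{-|η|^α/4} dη`. Then
`Ψ_α(0) = 2^{4/α} Γ(2/α)/(2πα)` and
`lim_{ξ→0, ξ≠0} (Ψ_α(0) - Ψ_α(ξ))/|ξ|² = Ψ_α(0) q_α` with
`q_α = 2^{4/α-2} Γ(4/α)/Γ(2/α)`. -/
theorem stmt13 (α : ℝ) (h0 : 0 < α) (h2 : α < 2)
    (Ψ : EuclideanSpace ℝ (Fin 2) → ℝ)
    (hΨ : ∀ ξ, Ψ ξ = (1 / (2 * π) ^ 2) * ∫ η : EuclideanSpace ℝ (Fin 2),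
      Real.cos ⟪η, ξ⟫ * Real.exp (-‖η‖ ^ α / 4)) :
    Ψ 0 = 2 ^ (4 / α) * Real.Gamma (2 / α) / (2 * π * α) ∧
    Tendsto (fun ξ : EuclideanSpace ℝ (Fin 2) => (Ψ 0 - Ψ ξ) / ‖ξ‖ ^ 2)
      (nhdsWithin 0 {(0 : EuclideanSpace ℝ (Fin 2))}ᶜ)
      (nhds (Ψ 0 * (2 ^ (4 / α - 2) * Real.Gamma (4 / α) / Real.Gamma (2 / α)))) := by
  have hπ : (0:ℝ) < π := Real.pi_pos
  set f : stmt13E → ℝ := fun η => Real.exp (-‖η‖ ^ α / 4) with hfdef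
  have hfc := stmt13_cont_f α h0
  have hfnn : ∀ η, 0 ≤ f η := fun η => (Real.exp_pos _).le
  have hf : Integrable f := by
    have := stmt13_integrable α h0 0
    simpa using this
  have h4to2 : (4:ℝ) ^ ((2:ℝ)/α) = 2 ^ ((4:ℝ)/α) := by
    rw [show (4:ℝ) = (2:ℝ)^(2:ℝ) by
      rw [show (2:ℝ) = ((2:ℕ):ℝ) by norm_num, Real.rpow_natCast]; norm_num,
      ← Real.rpow_mul (by norm_num)]
    congr 1; ring
  have h4to4 : (4:ℝ) ^ ((4:ℝ)/α) = 2 ^ ((8:ℝ)/α) := by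
    rw [show (4:ℝ) = (2:ℝ)^(2:ℝ) by
      rw [show (2:ℝ) = ((2:ℕ):ℝ) by norm_num, Real.rpow_natCast]; norm_num,
      ← Real.rpow_mul (by norm_num)]
    congr 1; ring
  have hJ0 : ∫ η : stmt13E, f η = 2 * π * (2:ℝ)^((4:ℝ)/α) * Real.Gamma (2/α) / α := by
    have h := stmt13_J_val α h0 0
    simpa [h4to2] using h
  have hJ2 : ∫ η : stmt13E, ‖η‖^2 * f η
      = 2 * π * (2:ℝ)^((8:ℝ)/α) * Real.Gamma (4/α) / α := by
    have h := stmt13_J_val α h0 2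
    norm_num at h
    rw [h, h4to4]
  have hΨ0 : Ψ 0 = (1/(2*π)^2) * ∫ η : stmt13E, f η := by
    rw [hΨ 0]
    congr 1
    apply integral_congr_ae
    filter_upwards with η
    simp [inner_zero_right, hfdef]
  have part1 : Ψ 0 = 2 ^ ((4:ℝ) / α) * Real.Gamma (2 / α) / (2 * π * α) := by
    rw [hΨ0, hJ0]
    field_simp
  refine ⟨part1, ?_⟩
  -- abbreviations
  set J2 : ℝ := ∫ η : stmt13E, ‖η‖^2 * f η with hJ2def
  set J4 : ℝ := ∫ η : stmt13E, ‖η‖^4 * f η with hJ4def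
  have hJ4nn : 0 ≤ J4 := integral_nonneg (fun η => by positivity)
  set L : ℝ := J2 / (4 * (2*π)^2) with hLdef
  -- the limit value equals Ψ 0 * q
  have hLval : L = Ψ 0 * (2 ^ ((4:ℝ) / α - 2) * Real.Gamma (4 / α) / Real.Gamma (2 / α)) := by
    have hΓ2 : 0 < Real.Gamma (2/α) := Real.Gamma_pos_of_pos (by positivity)
    rw [hLdef, hJ2, part1, Real.rpow_sub (by norm_num), show (2:ℝ)^(2:ℝ) = 4 by
      rw [show (2:ℝ) = ((2:ℕ):ℝ) by norm_num, Real.rpow_natCast]; norm_num]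
    rw [show (2:ℝ)^((8:ℝ)/α) = 2^((4:ℝ)/α) * 2^((4:ℝ)/α) by
      rw [← Real.rpow_add (by norm_num)]; congr 1; ring]
    field_simp
  rw [← hLval]
  -- integrability facts depending on ξ
  have hM2 := stmt13_integrable α h0 2
  have hM4 := stmt13_integrable α h0 4
  have hinnc : ∀ ξ : stmt13E, Continuous fun η : stmt13E => ⟪η, ξ⟫ := by
    intro ξ
    exact continuous_id.inner continuous_const
  have hcosint : ∀ ξ : stmt13E, Integrable (fun η : stmt13E => Real.cos ⟪η, ξ⟫ * f η) := by
    intro ξ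
    apply hf.mono (((Real.continuous_cos.comp (hinnc ξ)).mul hfc).aestronglyMeasurable)
    filter_upwards with η
    show ‖Real.cos ⟪η, ξ⟫ * f η‖ ≤ ‖f η‖
    rw [Real.norm_eq_abs, Real.norm_eq_abs, abs_mul, abs_of_nonneg (hfnn η)]
    exact mul_le_of_le_one_left (hfnn η) (Real.abs_cos_le_one _)
  have hsqint : ∀ ξ : stmt13E, Integrable (fun η : stmt13E => ⟪η, ξ⟫^2 * f η) := by
    intro ξ
    apply (hM2.const_mul (‖ξ‖^2)).mono ((((hinnc ξ).pow 2).mul hfc).aestronglyMeasurable)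
    filter_upwards with η
    simp only [Pi.mul_apply, Pi.pow_apply, Function.comp_apply]
    rw [Real.norm_eq_abs, Real.norm_eq_abs, abs_of_nonneg (by positivity),
      abs_of_nonneg (by positivity)]
    have h1 : |⟪η, ξ⟫| ≤ ‖η‖ * ‖ξ‖ := abs_real_inner_le_norm η ξ
    have h2 : ⟪η, ξ⟫^2 ≤ ‖η‖^2 * ‖ξ‖^2 := by nlinarith [abs_nonneg ⟪η, ξ⟫, sq_abs ⟪η, ξ⟫]
    calc ⟪η, ξ⟫^2 * f η ≤ (‖η‖^2 * ‖ξ‖^2) * f η := by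
          exact mul_le_mul_of_nonneg_right h2 (hfnn η)
      _ = ‖ξ‖^2 * (‖η‖^2 * f η) := by ring
  -- key estimate
  have key : ∀ ξ : stmt13E,
      |(Ψ 0 - Ψ ξ) - ‖ξ‖^2 * L| ≤ (3 * J4 / (2*π)^2) * ‖ξ‖^4 := by
    intro ξ
    have hdiff : Ψ 0 - Ψ ξ
        = (1/(2*π)^2) * ∫ η : stmt13E, (1 - Real.cos ⟪η, ξ⟫) * f η := by
      rw [hΨ0, hΨ ξ, ← mul_sub, ← integral_sub hf (hcosint ξ)]
      congr 1
      apply integral_congr_ae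
      filter_upwards with η
      ring
    have herrint : Integrable (fun η : stmt13E =>
        (Real.cos ⟪η, ξ⟫ - (1 - ⟪η, ξ⟫^2/2)) * f η) := by
      have : (fun η : stmt13E => (Real.cos ⟪η, ξ⟫ - (1 - ⟪η, ξ⟫^2/2)) * f η)
          = fun η => (Real.cos ⟪η, ξ⟫ * f η - f η) + (1/2) * (⟪η, ξ⟫^2 * f η) := by
        funext η; ring
      rw [this]
      exact ((hcosint ξ).sub hf).add ((hsqint ξ).const_mul _)
    have hsplit : ∫ η : stmt13E, (1 - Real.cos ⟪η, ξ⟫) * f η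
        = (∫ η : stmt13E, ⟪η, ξ⟫^2 * f η)/2
          - ∫ η : stmt13E, (Real.cos ⟪η, ξ⟫ - (1 - ⟪η, ξ⟫^2/2)) * f η := by
      rw [← integral_div, ← integral_sub ((hsqint ξ).div_const 2) herrint]
      apply integral_congr_ae
      filter_upwards with η
      ring
    have herrbound : |∫ η : stmt13E, (Real.cos ⟪η, ξ⟫ - (1 - ⟪η, ξ⟫^2/2)) * f η|
        ≤ 3 * ‖ξ‖^4 * J4 := by
      have hb : ‖∫ η : stmt13E, (Real.cos ⟪η, ξ⟫ - (1 - ⟪η, ξ⟫^2/2)) * f η‖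
          ≤ ∫ η : stmt13E, 3 * ‖ξ‖^4 * (‖η‖^4 * f η) := by
        apply norm_integral_le_of_norm_le (hM4.const_mul (3 * ‖ξ‖^4))
        filter_upwards with η
        rw [Real.norm_eq_abs, abs_mul, abs_of_nonneg (hfnn η)]
        have h1 : |Real.cos ⟪η, ξ⟫ - (1 - ⟪η, ξ⟫^2/2)| ≤ 3 * ⟪η, ξ⟫^4 := cos_err _
        have h2 : |⟪η, ξ⟫| ≤ ‖η‖ * ‖ξ‖ := abs_real_inner_le_norm η ξ
        have h2' : ⟪η, ξ⟫^2 ≤ ‖η‖^2 * ‖ξ‖^2 := by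
          nlinarith [abs_nonneg ⟪η, ξ⟫, sq_abs ⟪η, ξ⟫, norm_nonneg η, norm_nonneg ξ]
        have h3 : ⟪η, ξ⟫^4 ≤ ‖η‖^4 * ‖ξ‖^4 := by
          nlinarith [h2', sq_nonneg ⟪η, ξ⟫]
        calc |Real.cos ⟪η, ξ⟫ - (1 - ⟪η, ξ⟫^2/2)| * f η
            ≤ (3 * ⟪η, ξ⟫^4) * f η := mul_le_mul_of_nonneg_right h1 (hfnn η)
          _ ≤ (3 * (‖η‖^4 * ‖ξ‖^4)) * f η := by
              apply mul_le_mul_of_nonneg_right _ (hfnn η)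
              linarith
          _ = 3 * ‖ξ‖^4 * (‖η‖^4 * f η) := by ring
      rw [Real.norm_eq_abs] at hb
      calc |∫ η : stmt13E, (Real.cos ⟪η, ξ⟫ - (1 - ⟪η, ξ⟫^2/2)) * f η|
          ≤ ∫ η : stmt13E, 3 * ‖ξ‖^4 * (‖η‖^4 * f η) := hb
        _ = 3 * ‖ξ‖^4 * J4 := by rw [integral_const_mul _]
    rw [hdiff, hsplit, stmt13_moment α h0 ξ]
    have : (1/(2*π)^2) * (‖ξ‖ ^ 2 * ((∫ η : stmt13E, ‖η‖^2 * f η) / 2) / 2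
        - ∫ η : stmt13E, (Real.cos ⟪η, ξ⟫ - (1 - ⟪η, ξ⟫^2/2)) * f η) - ‖ξ‖^2 * L
        = -(1/(2*π)^2) * ∫ η : stmt13E, (Real.cos ⟪η, ξ⟫ - (1 - ⟪η, ξ⟫^2/2)) * f η := by
      rw [hLdef, hJ2def]
      field_simp
      ring
    rw [this, abs_mul, abs_neg, abs_of_nonneg (by positivity : (0:ℝ) ≤ 1/(2*π)^2)]
    calc (1/(2*π)^2) * |∫ η : stmt13E, (Real.cos ⟪η, ξ⟫ - (1 - ⟪η, ξ⟫^2/2)) * f η|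
        ≤ (1/(2*π)^2) * (3 * ‖ξ‖^4 * J4) := by
          apply mul_le_mul_of_nonneg_left herrbound (by positivity)
      _ = 3 * J4 / (2*π)^2 * ‖ξ‖^4 := by ring
  -- conclude via squeeze
  have hsub : Tendsto (fun ξ : stmt13E => (Ψ 0 - Ψ ξ) / ‖ξ‖^2 - L)
      (nhdsWithin 0 {(0:stmt13E)}ᶜ) (nhds 0) := by
    apply squeeze_zero_norm' (a := fun ξ : stmt13E => (3 * J4 / (2*π)^2) * ‖ξ‖^2)
    · filter_upwards [self_mem_nhdsWithin] with ξ hξ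
      have hξ0 : ξ ≠ 0 := by simpa using hξ
      have hn : (0:ℝ) < ‖ξ‖ := norm_pos_iff.mpr hξ0
      have hk := key ξ
      rw [Real.norm_eq_abs]
      have heq : (Ψ 0 - Ψ ξ)/‖ξ‖^2 - L = ((Ψ 0 - Ψ ξ) - ‖ξ‖^2 * L)/‖ξ‖^2 := by
        field_simp
      rw [heq, abs_div, abs_of_nonneg (by positivity : (0:ℝ) ≤ ‖ξ‖^2),
        div_le_iff₀ (by positivity)]
      calc |(Ψ 0 - Ψ ξ) - ‖ξ‖^2*L| ≤ (3*J4/(2*π)^2) * ‖ξ‖^4 := hk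
        _ = 3*J4/(2*π)^2 * ‖ξ‖^2 * ‖ξ‖^2 := by ring
    · have ht : Tendsto (fun ξ : stmt13E => (3 * J4 / (2*π)^2) * ‖ξ‖^2) (nhds 0)
          (nhds ((3*J4/(2*π)^2) * ‖(0:stmt13E)‖^2)) :=
        (continuous_const.mul (continuous_norm.pow 2)).tendsto 0
      simp only [norm_zero] at ht
      norm_num at ht
      exact ht.mono_left nhdsWithin_le_nhds
  have hfin := hsub.add (tendsto_const_nhds (x := L))
  simp only [sub_add_cancel, zero_add] at hfin
  exact hfin
end

section
/- Let α ∈ (0,1), χ_α > 0, l_o > 0, and define c: ℝ → ℝ by c(0) = χ_α / (2π² (1−α) l_o^{1−α}) and, for w ≠ 0, c(w) = (χ_α/(2π²)) |w|^{α−1} ∫_0^{|w|/l_o} u^{−α−1} sin(u) du. Then c is not Lebesgue integrable on ℝ. -/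
open MeasureTheory Real

section aux

variable {α : ℝ}

/-- The integrand is interval integrable on nonnegative intervals. -/
lemma aux_intInt (h0 : 0 < α) (h1 : α < 1) {a b : ℝ} (ha : 0 ≤ a) (hb : 0 ≤ b) :
    IntervalIntegrable (fun u : ℝ => u ^ (-α - 1) * Real.sin u) volume a b := by
  have hmaj : IntervalIntegrable (fun u : ℝ => u ^ (-α)) volume a b :=
    intervalIntegral.intervalIntegrable_rpow' (by linarith)
  refine hmaj.mono_fun ?_ ?_
  · refine (ContinuousOn.aestronglyMeasurable ?_ measurableSet_uIoc)
    intro u hu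
    have hu0 : 0 < u := lt_of_le_of_lt (le_min ha hb) hu.1
    exact ((Real.continuousAt_rpow_const u _ (Or.inl hu0.ne')).continuousWithinAt).mul
      Real.continuous_sin.continuousWithinAt
  · filter_upwards [ae_restrict_mem measurableSet_uIoc] with u hu
    have hu0 : 0 < u := lt_of_le_of_lt (le_min ha hb) hu.1
    have h1 : |u ^ (-α - 1) * Real.sin u| ≤ u ^ (-α - 1) * u := by
      rw [abs_mul, abs_of_nonneg (Real.rpow_nonneg hu0.le _)]
      exact mul_le_mul_of_nonneg_left
        (abs_sin_le_abs.trans_eq (abs_of_pos hu0)) (Real.rpow_nonneg hu0.le _)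
    simp only [Real.norm_eq_abs]
    rw [abs_of_nonneg (Real.rpow_nonneg hu0.le _)]
    calc |u ^ (-α - 1) * Real.sin u| ≤ u ^ (-α - 1) * u := h1
      _ = u ^ (-α - 1 + 1) := (Real.rpow_add_one hu0.ne' _).symm
      _ = u ^ (-α) := by norm_num

/-- Lower bound for the head `∫_0^{π/2}`. -/
lemma aux_head (h0 : 0 < α) (h1 : α < 1) :
    π ^ (-α) ≤ ∫ u in (0:ℝ)..(π/2), u ^ (-α - 1) * Real.sin u := by
  have hπ := Real.pi_pos
  have hInt1 : IntervalIntegrable (fun u : ℝ => 2 / π * u ^ (-α)) volume 0 (π/2) :=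
    (intervalIntegral.intervalIntegrable_rpow' (by linarith)).const_mul _
  have hInt2 : IntervalIntegrable (fun u : ℝ => u ^ (-α - 1) * Real.sin u) volume 0 (π/2) :=
    aux_intInt h0 h1 le_rfl (by positivity)
  have hmono : (∫ u in (0:ℝ)..(π/2), 2 / π * u ^ (-α))
      ≤ ∫ u in (0:ℝ)..(π/2), u ^ (-α - 1) * Real.sin u := by
    refine intervalIntegral.integral_mono_on (by positivity) hInt1 hInt2 ?_
    intro u hu
    rcases eq_or_lt_of_le hu.1 with h | hu0
    · rw [← h]
      rw [Real.zero_rpow (by linarith), Real.zero_rpow (by linarith)]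
      simp
    · have hsin : 2 / π * u ≤ Real.sin u := Real.mul_le_sin hu0.le hu.2
      calc 2 / π * u ^ (-α) = 2 / π * (u ^ (-α - 1) * u) := by
            rw [← Real.rpow_add_one hu0.ne']; norm_num
        _ = u ^ (-α - 1) * (2 / π * u) := by ring
        _ ≤ u ^ (-α - 1) * Real.sin u :=
            mul_le_mul_of_nonneg_left hsin (Real.rpow_nonneg hu0.le _)
  refine le_trans ?_ hmono
  have hval : (∫ u in (0:ℝ)..(π/2), 2 / π * u ^ (-α))
      = 2 / π * (((π/2) ^ (-α + 1) - (0:ℝ) ^ (-α + 1)) / (-α + 1)) := by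
    rw [intervalIntegral.integral_const_mul, integral_rpow (Or.inl (by linarith))]
  rw [hval, Real.zero_rpow (by linarith)]
  have hhalf : (0:ℝ) < π / 2 := by linarith
  have h2 : (π/2) ^ (-α + 1) = (π/2) ^ (-α) * (π/2) := by
    rw [← Real.rpow_add_one hhalf.ne']
  rw [h2]
  have h3 : 2 / π * (((π/2) ^ (-α) * (π/2) - 0) / (-α + 1)) = (π/2) ^ (-α) / (1 - α) := by
    have hne : (1:ℝ) - α ≠ 0 := by linarith
    have hne2 : (-α + 1 : ℝ) ≠ 0 := by linarith
    have hπne : π ≠ 0 := hπ.ne'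
    field_simp
    ring
  rw [h3]
  have h4 : π ^ (-α) ≤ (π/2) ^ (-α) :=
    Real.rpow_le_rpow_of_nonpos hhalf (by linarith) (by linarith)
  have h5 : (π/2) ^ (-α) ≤ (π/2) ^ (-α) / (1 - α) := by
    rw [le_div_iff₀ (by linarith)]
    nlinarith [Real.rpow_nonneg hhalf.le (-α)]
  linarith

/-- Tail bound via integration by parts: for `π ≤ T`,
`|∫_π^T u^{-α-1} sin u du| ≤ 3 π^{-α-1}`. -/
lemma aux_tail (h0 : 0 < α) (h1 : α < 1) {T : ℝ} (hT : π ≤ T) :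
    |∫ u in π..T, u ^ (-α - 1) * Real.sin u| ≤ 3 * π ^ (-α - 1) := by
  have hπ := Real.pi_pos
  have hTpos : 0 < T := lt_of_lt_of_le hπ hT
  have hmem : ∀ x ∈ Set.uIcc π T, (0:ℝ) < x := by
    intro x hx
    rw [Set.uIcc_of_le hT] at hx
    exact lt_of_lt_of_le hπ hx.1
  -- integration by parts
  have hu : ∀ x ∈ Set.uIcc π T, HasDerivAt (fun y : ℝ => y ^ (-α - 1))
      ((-α - 1) * x ^ (-α - 1 - 1)) x := fun x hx =>
    Real.hasDerivAt_rpow_const (Or.inl (hmem x hx).ne')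
  have hv : ∀ x ∈ Set.uIcc π T, HasDerivAt (fun y : ℝ => -Real.cos y) (Real.sin x) x := by
    intro x _
    have := (Real.hasDerivAt_cos x).neg; rwa [neg_neg] at this
  have hu' : IntervalIntegrable (fun x : ℝ => (-α - 1) * x ^ (-α - 1 - 1)) volume π T := by
    apply ContinuousOn.intervalIntegrable
    exact continuousOn_const.mul (fun x hx => ((Real.continuousAt_rpow_const x _
      (Or.inl (hmem x hx).ne')).continuousWithinAt))
  have hv' : IntervalIntegrable Real.sin volume π T :=
    Real.continuous_sin.intervalIntegrable _ _
  have hparts := intervalIntegral.integral_mul_deriv_eq_deriv_mul hu hv hu' hv'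
  -- simplify
  have habs1 : |T ^ (-α - 1) * -Real.cos T| ≤ π ^ (-α - 1) := by
    rw [abs_mul, abs_neg, abs_of_nonneg (Real.rpow_nonneg hTpos.le _)]
    calc T ^ (-α - 1) * |Real.cos T| ≤ T ^ (-α - 1) * 1 :=
          mul_le_mul_of_nonneg_left (Real.abs_cos_le_one T) (Real.rpow_nonneg hTpos.le _)
      _ = T ^ (-α - 1) := mul_one _
      _ ≤ π ^ (-α - 1) := Real.rpow_le_rpow_of_nonpos hπ hT (by linarith)
  have habs2 : |π ^ (-α - 1) * -Real.cos π| ≤ π ^ (-α - 1) := by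
    rw [abs_mul, abs_neg, abs_of_nonneg (Real.rpow_nonneg hπ.le _)]
    calc π ^ (-α - 1) * |Real.cos π| ≤ π ^ (-α - 1) * 1 :=
          mul_le_mul_of_nonneg_left (Real.abs_cos_le_one π) (Real.rpow_nonneg hπ.le _)
      _ = π ^ (-α - 1) := mul_one _
  have habs3 : |∫ x in π..T, (-α - 1) * x ^ (-α - 1 - 1) * -Real.cos x| ≤ π ^ (-α - 1) := by
    have hble : |∫ x in π..T, (-α - 1) * x ^ (-α - 1 - 1) * -Real.cos x|
        ≤ ∫ x in π..T, |(-α - 1) * x ^ (-α - 1 - 1) * -Real.cos x| :=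
      intervalIntegral.abs_integral_le_integral_abs hT
    have hIa : IntervalIntegrable (fun x : ℝ => |(-α - 1) * x ^ (-α - 1 - 1) * -Real.cos x|)
        volume π T := (hu'.mul_continuousOn (Real.continuous_cos.neg.continuousOn)).abs
    have hIb : IntervalIntegrable (fun x : ℝ => (α + 1) * x ^ (-α - 2)) volume π T := by
      apply ContinuousOn.intervalIntegrable
      exact continuousOn_const.mul (fun x hx => ((Real.continuousAt_rpow_const x _
        (Or.inl (hmem x hx).ne')).continuousWithinAt))
    have hmono : (∫ x in π..T, |(-α - 1) * x ^ (-α - 1 - 1) * -Real.cos x|)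
        ≤ ∫ x in π..T, (α + 1) * x ^ (-α - 2) := by
      refine intervalIntegral.integral_mono_on hT hIa hIb ?_
      intro x hx
      have hx0 : 0 < x := lt_of_lt_of_le hπ hx.1
      have hr : -α - 1 - 1 = -α - 2 := by ring
      rw [abs_mul, abs_mul, abs_neg, abs_of_nonneg (Real.rpow_nonneg hx0.le _), hr]
      have h1 : |(-α - 1 : ℝ)| = α + 1 := by rw [abs_of_nonpos (by linarith)]; ring
      rw [h1]
      calc (α + 1) * x ^ (-α - 2) * |Real.cos x| ≤ (α + 1) * x ^ (-α - 2) * 1 := by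
            apply mul_le_mul_of_nonneg_left (Real.abs_cos_le_one x)
            positivity
        _ = (α + 1) * x ^ (-α - 2) := mul_one _
    have hrint : (∫ x in π..T, x ^ (-α - 2))
        = (T ^ (-α - 2 + 1) - π ^ (-α - 2 + 1)) / (-α - 2 + 1) := by
      refine integral_rpow (Or.inr ⟨by intro h; have h2 : α = -1 := (by linarith); linarith, ?_⟩)
      rw [Set.uIcc_of_le hT]
      intro h
      exact absurd h.1 (by linarith)
    have hval : (∫ x in π..T, (α + 1) * x ^ (-α - 2))
        = (α + 1) * ((T ^ (-α - 1) - π ^ (-α - 1)) / (-α - 1)) := by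
      rw [intervalIntegral.integral_const_mul, hrint,
        show (-α - 2 + 1 : ℝ) = -α - 1 by ring]
    have hfin : (α + 1) * ((T ^ (-α - 1) - π ^ (-α - 1)) / (-α - 1)) ≤ π ^ (-α - 1) := by
      have hTr : 0 ≤ T ^ (-α - 1) := Real.rpow_nonneg hTpos.le _
      have heq : (α + 1) * ((T ^ (-α - 1) - π ^ (-α - 1)) / (-α - 1))
          = π ^ (-α - 1) - T ^ (-α - 1) := by
        have hne : (-α - 1 : ℝ) ≠ 0 := by intro h; linarith [h]
        field_simp
        ring
      rw [heq]
      linarith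
    linarith
  rw [hparts]
  have := abs_sub (T ^ (-α - 1) * -Real.cos T - π ^ (-α - 1) * -Real.cos π)
    (∫ x in π..T, (-α - 1) * x ^ (-α - 1 - 1) * -Real.cos x)
  calc |T ^ (-α - 1) * -Real.cos T - π ^ (-α - 1) * -Real.cos π
        - ∫ x in π..T, (-α - 1) * x ^ (-α - 1 - 1) * -Real.cos x|
      ≤ |T ^ (-α - 1) * -Real.cos T - π ^ (-α - 1) * -Real.cos π|
        + |∫ x in π..T, (-α - 1) * x ^ (-α - 1 - 1) * -Real.cos x| := abs_sub _ _
    _ ≤ (|T ^ (-α - 1) * -Real.cos T| + |π ^ (-α - 1) * -Real.cos π|)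
        + |∫ x in π..T, (-α - 1) * x ^ (-α - 1 - 1) * -Real.cos x| := by
          gcongr; exact abs_sub _ _
    _ ≤ (π ^ (-α - 1) + π ^ (-α - 1)) + π ^ (-α - 1) := by gcongr
    _ = 3 * π ^ (-α - 1) := by ring

/-- Uniform positive lower bound on `F(T) = ∫_0^T u^{-α-1} sin u du` for `T ≥ π`. -/
lemma aux_key (h0 : 0 < α) (h1 : α < 1) {T : ℝ} (hT : π ≤ T) :
    π ^ (-α) - 3 * π ^ (-α - 1) ≤ ∫ u in (0:ℝ)..T, u ^ (-α - 1) * Real.sin u := by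
  have hπ := Real.pi_pos
  have hI1 : IntervalIntegrable (fun u : ℝ => u ^ (-α - 1) * Real.sin u) volume 0 (π/2) :=
    aux_intInt h0 h1 le_rfl (by positivity)
  have hI2 : IntervalIntegrable (fun u : ℝ => u ^ (-α - 1) * Real.sin u) volume (π/2) π :=
    aux_intInt h0 h1 (by positivity) hπ.le
  have hI3 : IntervalIntegrable (fun u : ℝ => u ^ (-α - 1) * Real.sin u) volume π T :=
    aux_intInt h0 h1 hπ.le (by linarith)
  have hsplit2 : (∫ u in (0:ℝ)..π, u ^ (-α - 1) * Real.sin u)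
      = (∫ u in (0:ℝ)..(π/2), u ^ (-α - 1) * Real.sin u)
      + ∫ u in (π/2)..π, u ^ (-α - 1) * Real.sin u :=
    (intervalIntegral.integral_add_adjacent_intervals hI1 hI2).symm
  have hsplit1 : (∫ u in (0:ℝ)..T, u ^ (-α - 1) * Real.sin u)
      = (∫ u in (0:ℝ)..π, u ^ (-α - 1) * Real.sin u)
      + ∫ u in π..T, u ^ (-α - 1) * Real.sin u :=
    (intervalIntegral.integral_add_adjacent_intervals (hI1.trans hI2) hI3).symm
  have hhead := aux_head h0 h1
  have hmid : (0:ℝ) ≤ ∫ u in (π/2)..π, u ^ (-α - 1) * Real.sin u := by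
    apply intervalIntegral.integral_nonneg (by linarith)
    intro u hu
    have hu0 : 0 < u := by have := hu.1; linarith
    have hsin : 0 ≤ Real.sin u := Real.sin_nonneg_of_nonneg_of_le_pi hu0.le hu.2
    positivity
  have htail := aux_tail h0 h1 hT
  have htail' : -(3 * π ^ (-α - 1)) ≤ ∫ u in π..T, u ^ (-α - 1) * Real.sin u :=
    neg_le_of_abs_le htail
  rw [hsplit1, hsplit2]
  linarith

end aux

/-- Let `α ∈ (0,1)`, `χ_α > 0`, `l_o > 0`, and let `c : ℝ → ℝ` be given by
`c(0) = χ_α/(2π²(1-α) l_o^{1-α})` and, for `w ≠ 0`,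
`c(w) = (χ_α/(2π²)) |w|^{α-1} ∫_0^{|w|/l_o} u^{-α-1} sin u du`.
Then `c` is not Lebesgue integrable on `ℝ`. -/
theorem stmt15 (α χ lo : ℝ) (h0 : 0 < α) (h1 : α < 1) (hχ : 0 < χ) (hlo : 0 < lo)
    (c : ℝ → ℝ)
    (hc0 : c 0 = χ / (2 * π ^ 2 * (1 - α) * lo ^ (1 - α)))
    (hc : ∀ w : ℝ, w ≠ 0 → c w = (χ / (2 * π ^ 2)) * |w| ^ (α - 1) *
      ∫ u in (0:ℝ)..(|w| / lo), u ^ (-α - 1) * Real.sin u) :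
    ¬ Integrable c := by
  intro hInt
  have hπ := Real.pi_pos
  set ε : ℝ := π ^ (-α) - 3 * π ^ (-α - 1) with hε
  have hεpos : 0 < ε := by
    have h3 : (3:ℝ) < π := Real.pi_gt_three
    have : π ^ (-α) = π ^ (-α - 1) * π := by
      rw [← Real.rpow_add_one hπ.ne']; norm_num
    have hppos : 0 < π ^ (-α - 1) := Real.rpow_pos_of_pos hπ _
    rw [hε, this]
    nlinarith
  set K : ℝ := χ / (2 * π ^ 2) * ε with hK
  have hKpos : 0 < K := by
    apply mul_pos _ hεpos
    positivity
  set a : ℝ := π * lo with ha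
  have hapos : 0 < a := by positivity
  have hIOn : IntegrableOn c (Set.Ioi a) := hInt.integrableOn
  -- The function K * w^(α-1) is dominated by c on (a, ∞)
  have hdom : ∀ w ∈ Set.Ioi a, K * w ^ (α - 1) ≤ c w ∧ 0 ≤ K * w ^ (α - 1) := by
    intro w hw
    have hw0 : 0 < w := lt_trans hapos hw
    have hwa : a < w := hw
    constructor
    · rw [hc w hw0.ne', abs_of_pos hw0]
      have hwlo : π ≤ w / lo := by
        rw [le_div_iff₀ hlo]
        calc π * lo = a := ha.symm
          _ ≤ w := hwa.le
      have hkey := aux_key h0 h1 hwlo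
      have hwr : 0 ≤ w ^ (α - 1) := Real.rpow_nonneg hw0.le _
      have hcoef : (0:ℝ) < χ / (2 * π ^ 2) := by positivity
      calc K * w ^ (α - 1) = χ / (2 * π ^ 2) * w ^ (α - 1) * ε := by rw [hK]; ring
        _ ≤ χ / (2 * π ^ 2) * w ^ (α - 1) *
            ∫ u in (0:ℝ)..(w / lo), u ^ (-α - 1) * Real.sin u := by
          apply mul_le_mul_of_nonneg_left hkey
          positivity
    · positivity
  have hfInt : IntegrableOn (fun w : ℝ => K * w ^ (α - 1)) (Set.Ioi a) := by
    refine hIOn.mono' ?_ ?_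
    · refine (ContinuousOn.aestronglyMeasurable ?_ measurableSet_Ioi)
      intro w hw
      have hw0 : 0 < w := lt_trans hapos hw
      exact continuousWithinAt_const.mul
        ((Real.continuousAt_rpow_const w _ (Or.inl hw0.ne')).continuousWithinAt)
    · rw [ae_restrict_iff' measurableSet_Ioi]
      filter_upwards with w hw
      obtain ⟨hle, hnn⟩ := hdom w hw
      simp only [Real.norm_eq_abs]
      rw [abs_of_nonneg hnn]
      exact hle
  have hgInt : IntegrableOn (fun w : ℝ => w ^ (α - 1)) (Set.Ioi a) := by
    have := hfInt.const_mul K⁻¹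
    have heq : (fun w : ℝ => K⁻¹ * (K * w ^ (α - 1))) = fun w : ℝ => w ^ (α - 1) := by
      funext w
      rw [← mul_assoc, inv_mul_cancel₀ hKpos.ne', one_mul]
    rwa [heq] at this
  rw [integrableOn_Ioi_rpow_iff hapos] at hgInt
  linarith
end

section
/- Let α ∈ (0,1) ∪ (1,2), χ_α > 0 and 0 < l_o < L_o < ∞, and define c: ℝ → ℝ by c(w) = (χ_α/(2π²)) |w|^{α−1} ∫_{|w|/L_o}^{|w|/l_o} u^{−α−1} sin(u) du for w ≠ 0 and c(0) = (χ_α/(2π²)) (L_o^{α−1} − l_o^{α−1})/(α−1). Then c is Lebesgue integrable on ℝ. -/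
open MeasureTheory Real Set

private lemma myUIcc_subset_Ioi {b c : ℝ} (hb : 0 < b) (hc : 0 < c) :
    Set.uIcc b c ⊆ Set.Ioi 0 := fun _ hx => lt_of_lt_of_le (lt_min hb hc) hx.1

private lemma my_contOn (p : ℝ) :
    ContinuousOn (fun u : ℝ => u ^ p * Real.sin u) (Set.Ioi 0) := fun x hx =>
  ((Real.continuousAt_rpow_const x p (Or.inl (ne_of_gt hx))).mul
    Real.continuous_sin.continuousAt).continuousWithinAt

private lemma my_contOn_rpow (p : ℝ) :
    ContinuousOn (fun u : ℝ => u ^ p) (Set.Ioi 0) := fun x hx =>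
  (Real.continuousAt_rpow_const x p (Or.inl (ne_of_gt hx))).continuousWithinAt

private lemma my_ii {g : ℝ → ℝ} (hg : ContinuousOn g (Set.Ioi 0))
    {b c : ℝ} (hb : 0 < b) (hc : 0 < c) : IntervalIntegrable g volume b c :=
  (hg.mono (myUIcc_subset_Ioi hb hc)).intervalIntegrable

private lemma my_abs_f_le (α : ℝ) {u : ℝ} (hu : 0 < u) :
    |u ^ (-α - 1) * Real.sin u| ≤ u ^ (-α) := by
  rw [abs_mul, abs_of_nonneg (Real.rpow_nonneg hu.le _)]
  calc u ^ (-α - 1) * |Real.sin u|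
      ≤ u ^ (-α - 1) * u := by
        refine mul_le_mul_of_nonneg_left ?_ (Real.rpow_nonneg hu.le _)
        calc |Real.sin u| ≤ |u| := Real.abs_sin_le_abs
        _ = u := abs_of_pos hu
    _ = u ^ (-α) := by
        rw [← Real.rpow_add_one (ne_of_gt hu)]
        congr 1; ring

private lemma my_div_rpow {a x : ℝ} (ha : 0 < a) (hx : 0 < x) (p : ℝ) :
    (a / x) ^ p = a ^ p * x ^ (-p) := by
  rw [div_eq_mul_inv, Real.mul_rpow ha.le (inv_nonneg.2 hx.le), Real.inv_rpow hx.le,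
    ← Real.rpow_neg hx.le]

private lemma my_parts_bound (α : ℝ) (hα0 : 0 < α) {b c : ℝ} (hb : 0 < b) (hbc : b ≤ c) :
    |∫ u in b..c, u ^ (-α - 1) * Real.sin u| ≤ 3 * b ^ (-α - 1) := by
  have hc : 0 < c := lt_of_lt_of_le hb hbc
  have hsub := myUIcc_subset_Ioi hb hc
  have hparts : (∫ u in b..c, u ^ (-α - 1) * Real.sin u)
      = c ^ (-α - 1) * (-Real.cos c) - b ^ (-α - 1) * (-Real.cos b)
        - ∫ u in b..c, ((-α - 1) * u ^ (-α - 1 - 1)) * (-Real.cos u) := by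
    apply intervalIntegral.integral_mul_deriv_eq_deriv_mul
    · exact fun x hx => Real.hasDerivAt_rpow_const (Or.inl (ne_of_gt (hsub hx)))
    · intro x _
      exact (Real.hasDerivAt_cos x).neg.congr_deriv (neg_neg _)
    · refine my_ii ?_ hb hc
      exact (continuousOn_const.mul (my_contOn_rpow _))
    · exact Real.continuous_sin.intervalIntegrable _ _
  have habs : ∀ x : ℝ, 0 < x → |((-α - 1) * x ^ (-α - 1 - 1)) * (-Real.cos x)|
      ≤ (α + 1) * x ^ (-α - 2) := by
    intro x hx
    rw [abs_mul, abs_mul, abs_neg, abs_of_nonneg (Real.rpow_nonneg hx.le _)]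
    have h1 : |(-α - 1)| = α + 1 := by rw [abs_of_nonpos (by linarith)]; ring
    have h2 : (-α - 1 - 1 : ℝ) = -α - 2 := by ring
    rw [h1, h2, mul_assoc]
    refine mul_le_mul_of_nonneg_left ?_ (by linarith)
    exact mul_le_of_le_one_right (Real.rpow_nonneg hx.le _) (Real.abs_cos_le_one x)
  have hII : |∫ u in b..c, ((-α - 1) * u ^ (-α - 1 - 1)) * (-Real.cos u)|
      ≤ b ^ (-α - 1) - c ^ (-α - 1) := by
    have e1 : (∫ u in b..c, (α + 1) * u ^ (-α - 2))
        = b ^ (-α - 1) - c ^ (-α - 1) := by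
      rw [intervalIntegral.integral_const_mul, integral_rpow
        (Or.inr ⟨by intro h; linarith, fun h0 => lt_irrefl 0 (Set.mem_Ioi.1 (hsub h0))⟩)]
      have e2 : (-α - 2 + 1 : ℝ) = -α - 1 := by ring
      rw [e2]
      have hne : (-α - 1 : ℝ) ≠ 0 := by intro h; linarith
      field_simp
      ring
    calc |∫ u in b..c, ((-α - 1) * u ^ (-α - 1 - 1)) * (-Real.cos u)|
        ≤ ∫ u in b..c, |((-α - 1) * u ^ (-α - 1 - 1)) * (-Real.cos u)| :=
          intervalIntegral.abs_integral_le_integral_abs hbc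
      _ ≤ ∫ u in b..c, (α + 1) * u ^ (-α - 2) := by
          refine intervalIntegral.integral_mono_on hbc ?_ ?_ ?_
          · exact ((my_ii (continuousOn_const.mul (my_contOn_rpow _)) hb hc).mul_continuousOn
              ((Real.continuous_cos.neg.continuousOn))).abs
          · exact my_ii (continuousOn_const.mul (my_contOn_rpow _)) hb hc
          · intro x hx
            exact habs x (lt_of_lt_of_le hb hx.1)
      _ = b ^ (-α - 1) - c ^ (-α - 1) := e1
  have hcb : c ^ (-α - 1) ≤ b ^ (-α - 1) :=
    Real.rpow_le_rpow_of_nonpos hb hbc (by linarith)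
  have h1 : |c ^ (-α - 1) * (-Real.cos c)| ≤ c ^ (-α - 1) := by
    rw [abs_mul, abs_neg, abs_of_nonneg (Real.rpow_nonneg hc.le _)]
    exact mul_le_of_le_one_right (Real.rpow_nonneg hc.le _) (Real.abs_cos_le_one c)
  have h2 : |b ^ (-α - 1) * (-Real.cos b)| ≤ b ^ (-α - 1) := by
    rw [abs_mul, abs_neg, abs_of_nonneg (Real.rpow_nonneg hb.le _)]
    exact mul_le_of_le_one_right (Real.rpow_nonneg hb.le _) (Real.abs_cos_le_one b)
  rw [hparts]
  have hcnn : 0 ≤ c ^ (-α - 1) := Real.rpow_nonneg hc.le _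
  calc |c ^ (-α - 1) * (-Real.cos c) - b ^ (-α - 1) * (-Real.cos b)
        - ∫ u in b..c, ((-α - 1) * u ^ (-α - 1 - 1)) * (-Real.cos u)|
      ≤ |c ^ (-α - 1) * (-Real.cos c)| + |b ^ (-α - 1) * (-Real.cos b)|
        + |∫ u in b..c, ((-α - 1) * u ^ (-α - 1 - 1)) * (-Real.cos u)| := by
        exact (abs_sub _ _).trans (by gcongr; exact abs_sub _ _)
    _ ≤ 3 * b ^ (-α - 1) := by linarith

/-- Let `α ∈ (0,1) ∪ (1,2)`, `χ_α > 0`, `0 < l_o < L_o < ∞`, and let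
`c : ℝ → ℝ` be given by `c(w) = (χ_α/(2π²)) |w|^{α-1} ∫_{|w|/L_o}^{|w|/l_o} u^{-α-1} sin u du`
for `w ≠ 0` and `c(0) = (χ_α/(2π²)) (L_o^{α-1} - l_o^{α-1})/(α-1)`.
Then `c` is Lebesgue integrable on `ℝ`. -/
theorem stmt16 (α χ lo Lo : ℝ) (hα : α ∈ Set.Ioo (0:ℝ) 1 ∪ Set.Ioo (1:ℝ) 2)
    (hχ : 0 < χ) (hlo : 0 < lo) (hLo : lo < Lo)
    (c : ℝ → ℝ)
    (hc0 : c 0 = (χ / (2 * π ^ 2)) * (Lo ^ (α - 1) - lo ^ (α - 1)) / (α - 1))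
    (hc : ∀ w : ℝ, w ≠ 0 → c w = (χ / (2 * π ^ 2)) * |w| ^ (α - 1) *
      ∫ u in (|w| / Lo)..(|w| / lo), u ^ (-α - 1) * Real.sin u) :
    Integrable c := by
  have hα0 : 0 < α := by rcases hα with h | h; exacts [h.1, lt_trans one_pos h.1]
  have hα1 : α ≠ 1 := by rcases hα with h | h; exacts [ne_of_lt h.2, ne_of_gt h.1]
  set K : ℝ := χ / (2 * π ^ 2) with hKdef
  have hK0 : 0 < K := div_pos hχ (by positivity)
  have hLo0 : 0 < Lo := lt_trans hlo hLo
  -- measurability via a primitive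
  set F : ℝ → ℝ := fun t => ∫ x in (1:ℝ)..t, x ^ (-α - 1) * Real.sin x with hFdef
  have hFderiv : ∀ t ∈ Set.Ioi (0:ℝ), HasDerivAt F (t ^ (-α - 1) * Real.sin t) t := by
    intro t ht
    exact intervalIntegral.integral_hasDerivAt_right
      (my_ii (my_contOn _) one_pos ht)
      ((my_contOn _).stronglyMeasurableAtFilter isOpen_Ioi t ht)
      ((my_contOn _).continuousAt (isOpen_Ioi.mem_nhds ht))
  have hceq : ∀ w : ℝ, w ≠ 0 → c w = K * |w| ^ (α - 1) * (F (|w| / lo) - F (|w| / Lo)) := by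
    intro w hw
    have ha : 0 < |w| := abs_pos.2 hw
    rw [hc w hw]
    congr 1
    exact (intervalIntegral.integral_interval_sub_left
      (my_ii (my_contOn _) one_pos (div_pos ha hlo))
      (my_ii (my_contOn _) one_pos (div_pos ha hLo0))).symm
  have hmc : AEStronglyMeasurable c volume := by
    have hcont : ContinuousOn c ({(0:ℝ)}ᶜ) := by
      refine ContinuousOn.congr ?_ (fun w hw => hceq w (Set.mem_compl_singleton_iff.1 hw))
      intro w hw
      have hw' : w ≠ 0 := Set.mem_compl_singleton_iff.1 hw
      have ha : 0 < |w| := abs_pos.2 hw'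
      refine ContinuousAt.continuousWithinAt ?_
      have habs : ContinuousAt (fun w : ℝ => |w|) w := continuous_abs.continuousAt
      have h1 : ContinuousAt (fun w : ℝ => |w| ^ (α - 1)) w :=
        (Real.continuousAt_rpow_const |w| (α - 1) (Or.inl (ne_of_gt ha))).comp habs
      have h2 : ContinuousAt (fun w : ℝ => F (|w| / lo)) w :=
        ContinuousAt.comp (f := fun x : ℝ => |x| / lo)
          ((hFderiv _ (div_pos ha hlo)).continuousAt) (habs.div_const lo)
      have h3 : ContinuousAt (fun w : ℝ => F (|w| / Lo)) w :=
        ContinuousAt.comp (f := fun x : ℝ => |x| / Lo)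
          ((hFderiv _ (div_pos ha hLo0)).continuousAt) (habs.div_const Lo)
      exact (continuousAt_const.mul h1).mul (h2.sub h3)
    have h0 : (volume : Measure ℝ).restrict ({(0:ℝ)}ᶜ) = volume := by
      refine Measure.restrict_eq_self_of_ae_mem ?_
      rw [ae_iff]
      simp
    have := hcont.aestronglyMeasurable (μ := volume) (measurableSet_singleton (0:ℝ)).compl
    rwa [h0] at this
  -- uniform bound
  set S : ℝ := (lo ^ (α - 1) - Lo ^ (α - 1)) / (1 - α) with hSdef
  have hboundA : ∀ w : ℝ, w ≠ 0 → |c w| ≤ K * S := by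
    intro w hw
    have ha : 0 < |w| := abs_pos.2 hw
    have hb : 0 < |w| / Lo := div_pos ha hLo0
    have hcc : 0 < |w| / lo := div_pos ha hlo
    have hbc : |w| / Lo ≤ |w| / lo := by gcongr
    have hstep1 : |∫ u in (|w| / Lo)..(|w| / lo), u ^ (-α - 1) * Real.sin u|
        ≤ ∫ u in (|w| / Lo)..(|w| / lo), u ^ (-α) := by
      calc |∫ u in (|w| / Lo)..(|w| / lo), u ^ (-α - 1) * Real.sin u|
          ≤ ∫ u in (|w| / Lo)..(|w| / lo), |u ^ (-α - 1) * Real.sin u| :=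
            intervalIntegral.abs_integral_le_integral_abs hbc
        _ ≤ _ := intervalIntegral.integral_mono_on hbc
            ((my_ii (my_contOn _) hb hcc).abs) (my_ii (my_contOn_rpow _) hb hcc)
            (fun x hx => my_abs_f_le α (lt_of_lt_of_le hb hx.1))
    have hval : (∫ u in (|w| / Lo)..(|w| / lo), u ^ (-α)) = |w| ^ (1 - α) * S := by
      rw [integral_rpow (Or.inr ⟨by intro h; apply hα1; linarith,
        fun h0 => lt_irrefl 0 (Set.mem_Ioi.1 (myUIcc_subset_Ioi hb hcc h0))⟩),
        my_div_rpow ha hlo, my_div_rpow ha hLo0]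
      rw [show (-α + 1 : ℝ) = 1 - α by ring, show (-(1 - α) : ℝ) = α - 1 by ring, hSdef]
      ring
    have hone : |w| ^ (α - 1) * |w| ^ (1 - α) = 1 := by
      rw [← Real.rpow_add ha, show (α - 1) + (1 - α) = (0:ℝ) by ring, Real.rpow_zero]
    calc |c w| = K * |w| ^ (α - 1)
          * |∫ u in (|w| / Lo)..(|w| / lo), u ^ (-α - 1) * Real.sin u| := by
          rw [hc w hw, abs_mul,
            abs_of_nonneg (mul_nonneg hK0.le (Real.rpow_nonneg (abs_nonneg w) _))]
      _ ≤ K * |w| ^ (α - 1) * (|w| ^ (1 - α) * S) :=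
          mul_le_mul_of_nonneg_left (hval ▸ hstep1)
            (mul_nonneg hK0.le (Real.rpow_nonneg (abs_nonneg w) _))
      _ = K * (|w| ^ (α - 1) * |w| ^ (1 - α)) * S := by ring
      _ = K * S := by rw [hone]; ring
  have hboundB : ∀ w : ℝ, w ≠ 0 → |c w| ≤ (3 * K * Lo ^ (α + 1)) * (w ^ 2)⁻¹ := by
    intro w hw
    have ha : 0 < |w| := abs_pos.2 hw
    have hb : 0 < |w| / Lo := div_pos ha hLo0
    have hbc : |w| / Lo ≤ |w| / lo := by gcongr
    have h3 := my_parts_bound α hα0 hb hbc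
    have hbLo : (|w| / Lo) ^ (-α - 1) = |w| ^ (-α - 1) * Lo ^ (α + 1) := by
      rw [my_div_rpow ha hLo0, show (-(-α - 1) : ℝ) = α + 1 by ring]
    have hpow2 : |w| ^ (α - 1) * |w| ^ (-α - 1) = (w ^ 2)⁻¹ := by
      rw [← Real.rpow_add ha, show (α - 1) + (-α - 1) = (-2:ℝ) by ring,
        show (-2:ℝ) = -((2:ℕ):ℝ) by norm_num, Real.rpow_neg (abs_nonneg w),
        Real.rpow_natCast, sq_abs]
    calc |c w| = K * |w| ^ (α - 1)
          * |∫ u in (|w| / Lo)..(|w| / lo), u ^ (-α - 1) * Real.sin u| := by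
          rw [hc w hw, abs_mul,
            abs_of_nonneg (mul_nonneg hK0.le (Real.rpow_nonneg (abs_nonneg w) _))]
      _ ≤ K * |w| ^ (α - 1) * (3 * (|w| / Lo) ^ (-α - 1)) :=
          mul_le_mul_of_nonneg_left h3
            (mul_nonneg hK0.le (Real.rpow_nonneg (abs_nonneg w) _))
      _ = (3 * K * Lo ^ (α + 1)) * (|w| ^ (α - 1) * |w| ^ (-α - 1)) := by
          rw [hbLo]; ring
      _ = (3 * K * Lo ^ (α + 1)) * (w ^ 2)⁻¹ := by rw [hpow2]
  have hKS : 0 ≤ K * S := le_trans (abs_nonneg _) (hboundA 1 one_ne_zero)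
  set C1 : ℝ := K * S + |c 0| with hC1def
  have hC1nn : 0 ≤ C1 := add_nonneg hKS (abs_nonneg _)
  have hC1b : ∀ w : ℝ, |c w| ≤ C1 := by
    intro w
    by_cases hw : w = 0
    · rw [hw]; exact le_add_of_nonneg_left hKS
    · exact (hboundA w hw).trans (le_add_of_nonneg_right (abs_nonneg _))
  set C2 : ℝ := 3 * K * Lo ^ (α + 1) with hC2def
  have hC2nn : 0 ≤ C2 := by positivity
  set C : ℝ := 2 * C1 + 2 * C2 with hCdef
  have hbound : ∀ w : ℝ, ‖c w‖ ≤ C * (1 + w ^ 2)⁻¹ := by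
    intro w
    rw [Real.norm_eq_abs]
    have hden : (0:ℝ) < 1 + w ^ 2 := by positivity
    rw [← div_eq_mul_inv, le_div_iff₀ hden]
    by_cases hw2 : w ^ 2 ≤ 1
    · have h1 := hC1b w
      nlinarith [abs_nonneg (c w), hC2nn]
    · push_neg at hw2
      have hw : w ≠ 0 := by intro h; rw [h] at hw2; norm_num at hw2
      have hw2' : (0:ℝ) < w ^ 2 := by positivity
      have h2 : |c w| * w ^ 2 ≤ C2 := by
        have h1 := hboundB w hw
        rw [← div_eq_mul_inv, ← le_div_iff₀ hw2'] at *
        exact h1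
      nlinarith [abs_nonneg (c w), hC1nn,
        mul_le_mul_of_nonneg_left hw2.le (abs_nonneg (c w))]
  exact (integrable_inv_one_add_sq.const_mul C).mono' hmc (Filter.Eventually.of_forall hbound)
end
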